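/- arXiv:2309.11598 — 4 statements merged into one kernel-verified Lean document; each statement's English description precedes it below -/
import Mathlib

section
/- Let M be a structure in a first-order language and let φ(x̄) := ⋀ᵢ αᵢ(x̄ᵢ) ∧ ⋀ⱼ ¬βⱼ(x̄ⱼ) be a formula with parameters from M, where each x̄ᵢ and x̄ⱼ is a subtuple of x̄. Suppose that (1) φ(x̄) is mutually algebraic over M, (2) the set {ā : M ⊨ φ(ā)} is infinite, and (3) each αᵢ(x̄ᵢ) and each βⱼ(x̄ⱼ), regarded as a formula in its own free variables x̄ᵢ respectively x̄ⱼ, is mutually algebraic over M. Then the conjunction α(x̄) := ⋀ᵢ αᵢ(x̄ᵢ), regarded as a formula in the free variables x̄, is mutually algebraic over M. -/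
open FirstOrder FirstOrder.Language

/-- The conjunction of a finite set of formulas, as `BoundedFormula.iInf` was defined in the
older Mathlib (indexed by a `Finset`). -/
noncomputable def FirstOrder.Language.BoundedFormula.iInfFinset {L : Language} {α : Type*} {β : Type*} {n : ℕ}
    (s : Finset β) (f : β → L.BoundedFormula α n) : L.BoundedFormula α n :=
  (s.toList.map f).foldr (· ⊓ ·) ⊤

/-- A formula `φ` with free variables `Fin n` and parameters from `M` (the `Sum.inr`
variables, which are always assigned to themselves via `id`) is *mutually algebraic over `M`*
if there is `k : ℕ` such that for every partition of the free variables `Fin n` into two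
nonempty sets `s` and `sᶜ` and every assignment `a` to the variables in `s`, there are at
most `k` assignments to the variables in `sᶜ` making `φ` true (equivalently, at most `k`
valuations `v` agreeing with `a` on `s` and satisfying `φ`). -/
def IsMutuallyAlgebraic (L : Language) (M : Type*) [L.Structure M] {n : ℕ}
    (φ : L.Formula (Fin n ⊕ M)) : Prop :=
  ∃ k : ℕ, ∀ s : Set (Fin n), s.Nonempty → sᶜ.Nonempty → ∀ a : Fin n → M,
    {v : Fin n → M | (∀ i ∈ s, v i = a i) ∧ φ.Realize (Sum.elim v id)}.Finite ∧
    {v : Fin n → M | (∀ i ∈ s, v i = a i) ∧ φ.Realize (Sum.elim v id)}.ncard ≤ k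

section Aux

variable {X Y : Type*}

/-- Counting a set by fibers of a map into a finite set. -/
private lemma MAaux.count_helper {S : Set X} (g : X → Y) {T : Set Y} (hT : T.Finite)
    {a b : ℕ} (hTa : T.ncard ≤ a) (hmem : ∀ v ∈ S, g v ∈ T)
    (hfib : ∀ y, {v | v ∈ S ∧ g v = y}.Finite ∧ {v | v ∈ S ∧ g v = y}.ncard ≤ b) :
    S.Finite ∧ S.ncard ≤ a * b := by
  classical
  have hcover : S ⊆ ⋃ y ∈ T, {v | v ∈ S ∧ g v = y} := fun v hv =>
    Set.mem_biUnion (hmem v hv) ⟨hv, rfl⟩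
  have hfin : S.Finite := (hT.biUnion (fun y _ => (hfib y).1)).subset hcover
  refine ⟨hfin, ?_⟩
  have hsub : hfin.toFinset ⊆ hT.toFinset.biUnion (fun y => (hfib y).1.toFinset) := by
    intro v hv
    rw [Set.Finite.mem_toFinset] at hv
    obtain ⟨y, hy⟩ := Set.mem_iUnion.mp (hcover hv)
    obtain ⟨hyT, hvy⟩ := Set.mem_iUnion.mp hy
    exact Finset.mem_biUnion.mpr ⟨y, hT.mem_toFinset.mpr hyT, (hfib y).1.mem_toFinset.mpr hvy⟩
  calc S.ncard = hfin.toFinset.card := Set.ncard_eq_toFinset_card S hfin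
    _ ≤ (hT.toFinset.biUnion (fun y => (hfib y).1.toFinset)).card := Finset.card_le_card hsub
    _ ≤ ∑ y ∈ hT.toFinset, (hfib y).1.toFinset.card := Finset.card_biUnion_le
    _ ≤ hT.toFinset.card * b := by
        refine (Finset.sum_le_card_nsmul _ _ b fun y _ => ?_).trans (by simp [mul_comm])
        rw [← Set.ncard_eq_toFinset_card _ (hfib y).1]
        exact (hfib y).2
    _ ≤ a * b := by
        refine Nat.mul_le_mul_right b ?_
        rwa [← Set.ncard_eq_toFinset_card _ hT]

/-- Bounding a set by an injection into a finite bounded set. -/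
private lemma MAaux.inj_helper {S : Set X} {T : Set Y} (g : X → Y) (hT : T.Finite)
    {b : ℕ} (hTb : T.ncard ≤ b) (hmem : ∀ v ∈ S, g v ∈ T) (hinj : Set.InjOn g S) :
    S.Finite ∧ S.ncard ≤ b := by
  have himg : (g '' S).Finite := hT.subset (by rintro _ ⟨v, hv, rfl⟩; exact hmem v hv)
  exact ⟨himg.of_finite_image hinj,
    (Set.ncard_le_ncard_of_injOn g hmem hinj hT).trans hTb⟩

private lemma MAaux.ncard_iUnion_le {ι : Type*} [Fintype ι] (S : ι → Set X)
    (hS : ∀ i, (S i).Finite) :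
    (⋃ i, S i).Finite ∧ (⋃ i, S i).ncard ≤ ∑ i, (S i).ncard := by
  classical
  refine ⟨Set.finite_iUnion hS, ?_⟩
  have h1 : (⋃ i, S i) = ↑(Finset.univ.biUnion fun i => (hS i).toFinset) := by
    ext x
    simp [Set.mem_iUnion, Set.Finite.mem_toFinset]
  rw [h1, Set.ncard_coe_finset]
  refine Finset.card_biUnion_le.trans (Finset.sum_le_sum fun i _ => ?_)
  rw [← Set.ncard_eq_toFinset_card _ (hS i)]

/-- The purely combinatorial core of the Laskowski–Terry lemma. -/
private theorem MAaux.core {M : Type*} {n p q : ℕ} {m : Fin p → ℕ} {m' : Fin q → ℕ}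
    (e : ∀ i : Fin p, Fin (m i) → Fin n) (f : ∀ j : Fin q, Fin (m' j) → Fin n)
    (he : ∀ i, Function.Injective (e i)) (hf : ∀ j, Function.Injective (f j))
    (SA : ∀ i : Fin p, Set (Fin (m i) → M)) (SB : ∀ j : Fin q, Set (Fin (m' j) → M))
    (k : ℕ) (aa : Fin p → ℕ) (bb : Fin q → ℕ)
    (hk : ∀ s : Set (Fin n), s.Nonempty → sᶜ.Nonempty → ∀ a : Fin n → M,
      {v : Fin n → M | (∀ x ∈ s, v x = a x) ∧ (∀ i, v ∘ e i ∈ SA i) ∧ ∀ j, v ∘ f j ∉ SB j}.Finite ∧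
      {v : Fin n → M |
        (∀ x ∈ s, v x = a x) ∧ (∀ i, v ∘ e i ∈ SA i) ∧ ∀ j, v ∘ f j ∉ SB j}.ncard ≤ k)
    (haa : ∀ i, ∀ s : Set (Fin (m i)), s.Nonempty → sᶜ.Nonempty → ∀ a : Fin (m i) → M,
      {w : Fin (m i) → M | (∀ x ∈ s, w x = a x) ∧ w ∈ SA i}.Finite ∧
      {w : Fin (m i) → M | (∀ x ∈ s, w x = a x) ∧ w ∈ SA i}.ncard ≤ aa i)
    (hbb : ∀ j, ∀ s : Set (Fin (m' j)), s.Nonempty → sᶜ.Nonempty → ∀ a : Fin (m' j) → M,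
      {w : Fin (m' j) → M | (∀ x ∈ s, w x = a x) ∧ w ∈ SB j}.Finite ∧
      {w : Fin (m' j) → M | (∀ x ∈ s, w x = a x) ∧ w ∈ SB j}.ncard ≤ bb j)
    (hinf : {v : Fin n → M | (∀ i, v ∘ e i ∈ SA i) ∧ ∀ j, v ∘ f j ∉ SB j}.Infinite) :
    ∀ s : Set (Fin n), s.Nonempty → sᶜ.Nonempty → ∀ a : Fin n → M,
      {v : Fin n → M | (∀ x ∈ s, v x = a x) ∧ ∀ i, v ∘ e i ∈ SA i}.Finite ∧
      {v : Fin n → M | (∀ x ∈ s, v x = a x) ∧ ∀ i, v ∘ e i ∈ SA i}.ncard ≤ (1 + ∑ i, aa i) ^ n :=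
  by
  classical
  set Φ : Set (Fin n → M) := {v | (∀ i, v ∘ e i ∈ SA i) ∧ ∀ j, v ∘ f j ∉ SB j} with hΦdef
  obtain ⟨v0, hv0⟩ := hinf.nonempty
  -- Claim C : every nonempty proper subset of variables is crossed by some `e i`.
  have claimC : ∀ F : Set (Fin n), F.Nonempty → Fᶜ.Nonempty →
      ∃ i, (∃ y, e i y ∈ F) ∧ ∃ y, e i y ∉ F := by
    intro F hF hFc
    by_contra hcon
    push_neg at hcon
    -- the splice of `v` with `v0` along `F`
    set ρ : (Fin n → M) → (Fin n → M) := fun v x => if x ∈ F then v x else v0 x with hρdef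
    -- the splice of a solution satisfies all the `α`s
    have hsplice : ∀ v ∈ Φ, ∀ i, (ρ v) ∘ e i ∈ SA i := by
      intro v hv i
      by_cases hc : ∃ y, e i y ∈ F
      · have hall := hcon i hc
        have hre : (ρ v) ∘ e i = v ∘ e i := funext fun y => if_pos (hall y)
        rw [hre]; exact hv.1 i
      · push_neg at hc
        have hre : (ρ v) ∘ e i = v0 ∘ e i := funext fun y => if_neg (hc y)
        rw [hre]; exact hv0.1 i
    -- fibers of ρ over Φ are finite
    have hfibρ : ∀ y : Fin n → M, {v | v ∈ Φ ∧ ρ v = y}.Finite := by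
      intro y
      refine (hk F hF hFc y).1.subset ?_
      rintro v ⟨hv, hvy⟩
      refine ⟨fun x hx => ?_, hv.1, hv.2⟩
      have := congrFun hvy x
      simpa [hρdef, if_pos hx] using this
    -- hence the image of Φ under ρ is infinite
    have himg : (ρ '' Φ).Infinite := by
      intro hfin'
      refine hinf ?_
      have hcov : Φ ⊆ ⋃ y ∈ ρ '' Φ, {v | v ∈ Φ ∧ ρ v = y} := fun v hv =>
        Set.mem_biUnion (Set.mem_image_of_mem ρ hv) ⟨hv, rfl⟩
      exact (hfin'.biUnion fun y _ => hfibρ y).subset hcov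
    set N : ℕ := (1 + ∑ j, bb j) * k + 1 with hNdef
    obtain ⟨t, hts, htfin, htcard⟩ := himg.exists_subset_ncard_eq N
    have hrep : ∀ y, ∃ v, y ∈ t → (v ∈ Φ ∧ ρ v = y) := by
      intro y
      by_cases hy : y ∈ t
      · obtain ⟨v, hv, hveq⟩ := hts hy
        exact ⟨v, fun _ => ⟨hv, hveq⟩⟩
      · exact ⟨v0, fun h => absurd h hy⟩
    choose g hg using hrep
    set V : Set (Fin n → M) := g '' t with hVdef
    have hVΦ : ∀ v ∈ V, v ∈ Φ := by rintro _ ⟨y, hy, rfl⟩; exact (hg y hy).1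
    have hVρ : ∀ y ∈ t, ρ (g y) = y := fun y hy => (hg y hy).2
    have hVinj : Set.InjOn g t := fun y1 h1 y2 h2 hgy => by
      rw [← hVρ y1 h1, ← hVρ y2 h2, hgy]
    have hVcard : V.ncard = N := by rw [hVdef, Set.ncard_image_of_injOn hVinj, htcard]
    have hρVinj : Set.InjOn ρ V := by
      rintro _ ⟨y1, h1, rfl⟩ _ ⟨y2, h2, rfl⟩ hr
      rw [hVρ y1 h1, hVρ y2 h2] at hr
      rw [hr]
    -- classification of elements of V
    set χ : (Fin n → M) → Option (Σ j : Fin q, Fin (m' j) → M) := fun w =>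
      if h : ∃ j, (ρ w) ∘ f j ∈ SB j then some ⟨h.choose, (ρ w) ∘ f h.choose⟩ else none
      with hχdef
    -- crossing property
    have hcross : ∀ w ∈ V, ∀ j : Fin q, (ρ w) ∘ f j ∈ SB j →
        (∃ x, f j x ∈ F) ∧ ∃ x, f j x ∉ F := by
      intro w hw j hj
      constructor
      · by_contra hc
        push_neg at hc
        have hre : (ρ w) ∘ f j = v0 ∘ f j := funext fun y => if_neg (hc y)
        rw [hre] at hj
        exact hv0.2 j hj
      · by_contra hc
        push_neg at hc
        have hre : (ρ w) ∘ f j = w ∘ f j := funext fun y => if_pos (hc y)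
        rw [hre] at hj
        exact (hVΦ w hw).2 j hj
    -- the target of χ
    set D : ∀ j : Fin q, Set (Fin (m' j) → M) := fun j =>
      {w | (∀ x ∈ {x | f j x ∉ F}, w x = (v0 ∘ f j) x) ∧ w ∈ SB j} with hDdef
    have hDfin : ∀ j : Fin q, ((∃ x, f j x ∈ F) ∧ ∃ x, f j x ∉ F) →
        (D j).Finite ∧ (D j).ncard ≤ bb j := by
      intro j hcr
      have h1 : ({x | f j x ∉ F} : Set (Fin (m' j))).Nonempty := by
        obtain ⟨x, hx⟩ := hcr.2; exact ⟨x, hx⟩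
      have h2 : ({x | f j x ∉ F} : Set (Fin (m' j)))ᶜ.Nonempty := by
        obtain ⟨x, hx⟩ := hcr.1; exact ⟨x, fun hc => hc hx⟩
      exact hbb j _ h1 h2 (v0 ∘ f j)
    set D' : ∀ j : Fin q, Set (Fin (m' j) → M) := fun j =>
      if ((∃ x, f j x ∈ F) ∧ ∃ x, f j x ∉ F) then D j else ∅ with hD'def
    have hD'fin : ∀ j, (D' j).Finite ∧ (D' j).ncard ≤ bb j := by
      intro j
      by_cases hcr : ((∃ x, f j x ∈ F) ∧ ∃ x, f j x ∉ F)
      · rw [hD'def]; simp only [if_pos hcr]; exact hDfin j hcr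
      · rw [hD'def]; simp only [if_neg hcr]; simp
    set T : Set (Option (Σ j : Fin q, Fin (m' j) → M)) :=
      insert none (⋃ j : Fin q, (fun d => (some ⟨j, d⟩ : Option _)) '' D' j) with hTdef
    have hTUfin := MAaux.ncard_iUnion_le
      (fun j : Fin q => (fun d => (some (⟨j, d⟩ : Σ j : Fin q, Fin (m' j) → M))) '' D' j)
      (fun j => ((hD'fin j).1).image _)
    have hTfin : T.Finite := (hTUfin.1).insert none
    have hTcard : T.ncard ≤ 1 + ∑ j, bb j := by
      refine (Set.ncard_insert_le _ _).trans ?_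
      rw [add_comm]
      refine Nat.add_le_add_left ?_ 1
      refine hTUfin.2.trans (Finset.sum_le_sum fun j _ => ?_)
      exact (Set.ncard_image_le (hD'fin j).1).trans (hD'fin j).2
    -- χ maps V into T
    have hmemT : ∀ v ∈ V, χ v ∈ T := by
      intro v hv
      rw [hχdef]
      by_cases h : ∃ j, (ρ v) ∘ f j ∈ SB j
      · simp only [dif_pos h]
        have hj := h.choose_spec
        have hcr := hcross v hv h.choose hj
        refine Set.mem_insert_of_mem _ (Set.mem_iUnion.mpr ⟨h.choose, ?_⟩)
        refine ⟨(ρ v) ∘ f h.choose, ?_, rfl⟩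
        rw [hD'def]
        simp only [if_pos hcr]
        exact ⟨fun x hx => by simp [hρdef, if_neg hx], hj⟩
      · simp only [dif_neg h]
        exact Set.mem_insert _ _
    -- fibers of χ on V are small
    have hfibχ : ∀ y, {v | v ∈ V ∧ χ v = y}.Finite ∧ {v | v ∈ V ∧ χ v = y}.ncard ≤ k := by
      intro y
      rcases Set.eq_empty_or_nonempty {v | v ∈ V ∧ χ v = y} with hemp | ⟨w0, hw0V, hw0χ⟩
      · rw [hemp]; simp
      rcases y with _ | ⟨j, d⟩
      · -- none case : the splice is a solution, agreeing with v0 off F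
        have hFcc : (Fᶜ)ᶜ.Nonempty := by rwa [compl_compl]
        have hkW := hk Fᶜ hFc hFcc v0
        refine MAaux.inj_helper ρ hkW.1 hkW.2 ?_ (hρVinj.mono fun v hv => hv.1)
        rintro v ⟨hvV, hvχ⟩
        have hnex : ¬ ∃ j, (ρ v) ∘ f j ∈ SB j := by
          intro hex
          rw [hχdef] at hvχ
          simp only [dif_pos hex] at hvχ
          exact nomatch hvχ
        refine ⟨fun x hx => by simp [hρdef, if_neg (Set.notMem_of_mem_compl hx)], ?_, ?_⟩
        · exact hsplice v (hVΦ v hvV) 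
        · intro j hj; exact hnex ⟨j, hj⟩
      · -- some case
        -- extract the crossing data from the witness w0
        have hw0ex : ∃ h : ∃ j', (ρ w0) ∘ f j' ∈ SB j',
            (⟨h.choose, (ρ w0) ∘ f h.choose⟩ : Σ j : Fin q, Fin (m' j) → M) = ⟨j, d⟩ := by
          rw [hχdef] at hw0χ
          by_cases h : ∃ j', (ρ w0) ∘ f j' ∈ SB j'
          · simp only [dif_pos h] at hw0χ
            exact ⟨h, Option.some.inj hw0χ⟩
          · simp only [dif_neg h] at hw0χ
            exact nomatch hw0χ
        obtain ⟨hex0, hmk⟩ := hw0ex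
        have hcr : (∃ x, f j x ∈ F) ∧ ∃ x, f j x ∉ F := by
          have := hcross w0 hw0V hex0.choose hex0.choose_spec
          obtain ⟨hj, -⟩ := Sigma.mk.inj_iff.mp hmk
          rwa [hj] at this
        -- the template
        set a' : Fin n → M := fun x => Function.extend (f j) d v0 x with ha'def
        have hs1 : (Set.range (f j) ∩ F).Nonempty := by
          obtain ⟨x, hx⟩ := hcr.1; exact ⟨f j x, ⟨x, rfl⟩, hx⟩
        have hs2 : (Set.range (f j) ∩ F)ᶜ.Nonempty := by
          obtain ⟨x, hx⟩ := hFc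
          exact ⟨x, fun hc => hx hc.2⟩
        have hkW := hk (Set.range (f j) ∩ F) hs1 hs2 a'
        refine ⟨hkW.1.subset ?_, (Set.ncard_le_ncard ?_ hkW.1).trans hkW.2⟩ <;>
        · rintro v ⟨hvV, hvχ⟩
          have hvex : ∃ h : ∃ j', (ρ v) ∘ f j' ∈ SB j',
              (⟨h.choose, (ρ v) ∘ f h.choose⟩ : Σ j : Fin q, Fin (m' j) → M) = ⟨j, d⟩ := by
            rw [hχdef] at hvχ
            by_cases h : ∃ j', (ρ v) ∘ f j' ∈ SB j'
            · simp only [dif_pos h] at hvχ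
              exact ⟨h, Option.some.inj hvχ⟩
            · simp only [dif_neg h] at hvχ
              exact nomatch hvχ
          obtain ⟨hexv, hmkv⟩ := hvex
          obtain ⟨hjv, hdv⟩ := Sigma.mk.inj_iff.mp hmkv
          have hρvd : (ρ v) ∘ f j = d := by
            subst hjv
            exact eq_of_heq hdv
          refine ⟨?_, (hVΦ v hvV).1, (hVΦ v hvV).2⟩
          rintro x ⟨⟨y, rfl⟩, hxF⟩
          have h1 : v (f j y) = d y := by
            have := congrFun hρvd y
            simpa [hρdef, if_pos hxF] using this
          rw [h1]
          exact ((hf j).extend_apply d v0 y).symm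
    have := MAaux.count_helper χ hTfin hTcard hmemT hfibχ
    have hle := this.2
    rw [hVcard, hNdef] at hle
    omega
  -- the main induction
  have main : ∀ d : ℕ, ∀ F : Set (Fin n), F.Nonempty → ∀ c : Fin n → M, n - F.ncard ≤ d →
      {v : Fin n → M | (∀ x ∈ F, v x = c x) ∧ ∀ i, v ∘ e i ∈ SA i}.Finite ∧
      {v : Fin n → M | (∀ x ∈ F, v x = c x) ∧ ∀ i, v ∘ e i ∈ SA i}.ncard ≤ (1 + ∑ i, aa i) ^ d := by
    intro d
    induction d with
    | zero =>
      intro F hF c hd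
      have hFuniv : F = Set.univ := by
        by_contra hne
        have hlt : F.ncard < n := by
          have := Set.ncard_lt_ncard (Set.ssubset_univ_iff.mpr hne) Set.finite_univ
          rwa [Set.ncard_univ, Nat.card_eq_fintype_card, Fintype.card_fin] at this
        omega
      subst hFuniv
      have hsub : {v : Fin n → M | (∀ x ∈ Set.univ, v x = c x) ∧ ∀ i, v ∘ e i ∈ SA i} ⊆ {c} :=
        fun v hv => funext fun x => hv.1 x (Set.mem_univ x)
      exact ⟨(Set.finite_singleton c).subset hsub,
        by simpa using (Set.ncard_le_ncard hsub (Set.finite_singleton c)).trans (by simp)⟩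
    | succ d ih =>
      intro F hF c hd
      by_cases hFc : Fᶜ.Nonempty
      · obtain ⟨i, hi1, hi2⟩ := claimC F hF hFc
        obtain ⟨y1, hy1⟩ := hi1
        obtain ⟨y2, hy2⟩ := hi2
        have hs1 : ((e i) ⁻¹' F).Nonempty := ⟨y1, hy1⟩
        have hs2 : ((e i) ⁻¹' F)ᶜ.Nonempty := ⟨y2, hy2⟩
        have hDaa := haa i ((e i) ⁻¹' F) hs1 hs2 (c ∘ e i)
        -- count by fibers of v ↦ v ∘ e i
        have hmem : ∀ v ∈ {v : Fin n → M | (∀ x ∈ F, v x = c x) ∧ ∀ i', v ∘ e i' ∈ SA i'},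
            v ∘ e i ∈ {w : Fin (m i) → M | (∀ x ∈ (e i) ⁻¹' F, w x = (c ∘ e i) x) ∧ w ∈ SA i} := by
          rintro v ⟨hvF, hvA⟩
          exact ⟨fun x hx => hvF (e i x) hx, hvA i⟩
        have hfib : ∀ w : Fin (m i) → M,
            {v : Fin n → M |
              v ∈ {v : Fin n → M | (∀ x ∈ F, v x = c x) ∧ ∀ i', v ∘ e i' ∈ SA i'} ∧
              v ∘ e i = w}.Finite ∧
            {v : Fin n → M |
              v ∈ {v : Fin n → M | (∀ x ∈ F, v x = c x) ∧ ∀ i', v ∘ e i' ∈ SA i'} ∧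
              v ∘ e i = w}.ncard ≤ (1 + ∑ i, aa i) ^ d := by
          intro w
          -- each fiber is a fiber over the larger set F ∪ range (e i)
          set c' : Fin n → M := fun x => if x ∈ F then c x else Function.extend (e i) w c x
            with hc'def
          have hFN : (F ∪ Set.range (e i)).Nonempty := hF.mono Set.subset_union_left
          have hcard : n - (F ∪ Set.range (e i)).ncard ≤ d := by
            have hsub : insert (e i y2) F ⊆ F ∪ Set.range (e i) := by
              rintro x (rfl | hx)
              · exact Or.inr ⟨y2, rfl⟩
              · exact Or.inl hx
            have h1 : F.ncard + 1 ≤ (F ∪ Set.range (e i)).ncard := by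
              have h2 := Set.ncard_le_ncard hsub (Set.toFinite _)
              rwa [Set.ncard_insert_of_notMem hy2 (Set.toFinite F)] at h2
            have h3 : n - (F ∪ Set.range (e i)).ncard ≤ n - (F.ncard + 1) :=
              Nat.sub_le_sub_left h1 n
            refine h3.trans ?_
            rw [← Nat.sub_sub]
            exact Nat.sub_le_of_le_add hd
          have hIH := ih (F ∪ Set.range (e i)) hFN c' hcard
          have hsub : {v : Fin n → M | ((∀ x ∈ F, v x = c x) ∧ ∀ i', v ∘ e i' ∈ SA i') ∧
              v ∘ e i = w} ⊆
              {v : Fin n → M | (∀ x ∈ F ∪ Set.range (e i), v x = c' x) ∧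
                ∀ i', v ∘ e i' ∈ SA i'} := by
            rintro v ⟨⟨hvF, hvA⟩, hvw⟩
            refine ⟨?_, hvA⟩
            rintro x (hx | ⟨y, rfl⟩)
            · rw [hc'def]; simp only [if_pos hx]; exact hvF x hx
            · by_cases hxF : e i y ∈ F
              · rw [hc'def]; simp only [if_pos hxF]; exact hvF _ hxF
              · rw [hc'def]
                simp only [if_neg hxF, (he i).extend_apply]
                exact congrFun hvw y
          exact ⟨hIH.1.subset hsub, (Set.ncard_le_ncard hsub hIH.1).trans hIH.2⟩
        have hc := MAaux.count_helper (b := (1 + ∑ i, aa i) ^ d) (fun v : Fin n → M => v ∘ e i)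
          hDaa.1 hDaa.2 hmem hfib
        have haB : aa i ≤ 1 + ∑ i, aa i := by
          have h4 := Finset.single_le_sum (f := aa) (fun j _ => Nat.zero_le _)
            (Finset.mem_univ i)
          exact h4.trans (Nat.le_add_left _ 1)
        refine ⟨hc.1, hc.2.trans ?_⟩
        calc aa i * (1 + ∑ i, aa i) ^ d ≤ (1 + ∑ i, aa i) * (1 + ∑ i, aa i) ^ d :=
            Nat.mul_le_mul_right _ haB
          _ = (1 + ∑ i, aa i) ^ (d + 1) := by ring
      · -- F = univ
        have hFuniv : F = Set.univ := by
          rw [Set.not_nonempty_iff_eq_empty] at hFc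
          rwa [← Set.compl_empty_iff]
        subst hFuniv
        have hsub : {v : Fin n → M | (∀ x ∈ Set.univ, v x = c x) ∧ ∀ i, v ∘ e i ∈ SA i} ⊆ {c} :=
          fun v hv => funext fun x => hv.1 x (Set.mem_univ x)
        refine ⟨(Set.finite_singleton c).subset hsub,
          ((Set.ncard_le_ncard hsub (Set.finite_singleton c)).trans ?_)⟩
        simpa using Nat.one_le_pow _ _ (by omega)
  intro s hs hsc a
  exact main n s hs a (Nat.sub_le _ _)

end Aux

private lemma MAaux.realize_iInfFinset {L : Language} {M : Type*} [L.Structure M] {α : Type*}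
    {β : Type*} {n : ℕ} (s : Finset β) (f : β → L.BoundedFormula α n) (v : α → M)
    (xs : Fin n → M) :
    (BoundedFormula.iInfFinset s f).Realize v xs ↔ ∀ b ∈ s, (f b).Realize v xs := by
  simp [BoundedFormula.iInfFinset, BoundedFormula.realize_foldr_inf]

/-- Laskowski–Terry: suppose `φ(x̄) = ⋀ᵢ αᵢ(x̄ᵢ) ∧ ⋀ⱼ ¬βⱼ(x̄ⱼ)`, where each `x̄ᵢ`, `x̄ⱼ`
is a subtuple of `x̄` (given by injections `e i : Fin (m i) → Fin n` and
`f j : Fin (m' j) → Fin n`).  If (1) `φ` is mutually algebraic over `M`, (2) the set of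
realizations of `φ` in `M` is infinite, and (3) each `αᵢ` and `βⱼ` (as a formula in its own
free variables) is mutually algebraic over `M`, then `⋀ᵢ αᵢ(x̄ᵢ)`, regarded as a formula in
the free variables `x̄`, is mutually algebraic over `M`. -/
theorem mutuallyAlgebraic_conjunction_of_infinite (L : Language) (M : Type*) [L.Structure M]
    {n p q : ℕ} (m : Fin p → ℕ) (m' : Fin q → ℕ)
    (α : ∀ i : Fin p, L.Formula (Fin (m i) ⊕ M))
    (β : ∀ j : Fin q, L.Formula (Fin (m' j) ⊕ M))
    (e : ∀ i : Fin p, Fin (m i) → Fin n) (f : ∀ j : Fin q, Fin (m' j) → Fin n)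
    (he : ∀ i, Function.Injective (e i)) (hf : ∀ j, Function.Injective (f j))
    (φ : L.Formula (Fin n ⊕ M))
    (hφdef : φ =
      (BoundedFormula.iInfFinset Finset.univ fun i : Fin p => (α i).relabel (Sum.map (e i) id)) ⊓
      (BoundedFormula.iInfFinset Finset.univ fun j : Fin q =>
        ((β j).relabel (Sum.map (f j) id)).not))
    (hφma : IsMutuallyAlgebraic L M φ)
    (hinf : {v : Fin n → M | φ.Realize (Sum.elim v id)}.Infinite)
    (hα : ∀ i, IsMutuallyAlgebraic L M (α i))
    (hβ : ∀ j, IsMutuallyAlgebraic L M (β j)) :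
    IsMutuallyAlgebraic L M
      (BoundedFormula.iInfFinset Finset.univ fun i : Fin p => (α i).relabel (Sum.map (e i) id)) := by
  classical
  subst hφdef
  obtain ⟨k, hk⟩ := hφma
  choose aa haa using hα
  choose bb hbb using hβ
  -- set-level data
  set SA : ∀ i : Fin p, Set (Fin (m i) → M) :=
    fun i => {w | (α i).Realize (Sum.elim w id)} with hSAdef
  set SB : ∀ j : Fin q, Set (Fin (m' j) → M) :=
    fun j => {w | (β j).Realize (Sum.elim w id)} with hSBdef
  -- bridging lemma for valuations
  have helim : ∀ (r : ℕ) (g : Fin r → Fin n) (v : Fin n → M),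
      Sum.elim v (id : M → M) ∘ Sum.map g id = Sum.elim (v ∘ g) id := by
    intro r g v; funext x; cases x <;> rfl
  have hAiff : ∀ v : Fin n → M,
      Formula.Realize
        (BoundedFormula.iInfFinset Finset.univ fun i : Fin p => (α i).relabel (Sum.map (e i) id))
        (Sum.elim v id) ↔ ∀ i, v ∘ e i ∈ SA i := by
    intro v
    rw [show Formula.Realize
        (BoundedFormula.iInfFinset Finset.univ fun i : Fin p => (α i).relabel (Sum.map (e i) id))
        (Sum.elim v id) ↔ (BoundedFormula.iInfFinset Finset.univ fun i : Fin p =>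
          (α i).relabel (Sum.map (e i) id)).Realize (Sum.elim v id) (default : Fin 0 → M)
        from Iff.rfl, MAaux.realize_iInfFinset]
    simp only [Finset.mem_univ, true_implies]
    refine forall_congr' fun i => ?_
    exact Formula.realize_relabel.trans (by rw [helim (m i) (e i) v]; exact Iff.rfl)
  have hBiff : ∀ (j : Fin q) (v : Fin n → M),
      Formula.Realize ((β j).relabel (Sum.map (f j) id)) (Sum.elim v id) ↔ v ∘ f j ∈ SB j := by
    intro j v
    exact Formula.realize_relabel.trans (by rw [helim (m' j) (f j) v]; exact Iff.rfl)
  have hφiff : ∀ v : Fin n → M,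
      Formula.Realize
        ((BoundedFormula.iInfFinset Finset.univ fun i : Fin p => (α i).relabel (Sum.map (e i) id)) ⊓
          (BoundedFormula.iInfFinset Finset.univ fun j : Fin q =>
            ((β j).relabel (Sum.map (f j) id)).not))
        (Sum.elim v id) ↔ (∀ i, v ∘ e i ∈ SA i) ∧ ∀ j, v ∘ f j ∉ SB j := by
    intro v
    rw [show Formula.Realize
        ((BoundedFormula.iInfFinset Finset.univ fun i : Fin p => (α i).relabel (Sum.map (e i) id)) ⊓
          (BoundedFormula.iInfFinset Finset.univ fun j : Fin q =>
            ((β j).relabel (Sum.map (f j) id)).not))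
        (Sum.elim v id) ↔
        ((BoundedFormula.iInfFinset Finset.univ fun i : Fin p => (α i).relabel (Sum.map (e i) id)) ⊓
          (BoundedFormula.iInfFinset Finset.univ fun j : Fin q =>
            ((β j).relabel (Sum.map (f j) id)).not)).Realize
          (Sum.elim v id) (default : Fin 0 → M) from Iff.rfl,
      BoundedFormula.realize_inf]
    refine and_congr (hAiff v) ?_
    rw [MAaux.realize_iInfFinset]
    simp only [Finset.mem_univ, true_implies]
    refine forall_congr' fun j => ?_
    rw [BoundedFormula.realize_not]
    exact not_congr (hBiff j v)
  -- translate the hypotheses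
  have hk' : ∀ s : Set (Fin n), s.Nonempty → sᶜ.Nonempty → ∀ a : Fin n → M,
      {v : Fin n → M |
        (∀ x ∈ s, v x = a x) ∧ (∀ i, v ∘ e i ∈ SA i) ∧ ∀ j, v ∘ f j ∉ SB j}.Finite ∧
      {v : Fin n → M |
        (∀ x ∈ s, v x = a x) ∧ (∀ i, v ∘ e i ∈ SA i) ∧ ∀ j, v ∘ f j ∉ SB j}.ncard ≤ k := by
    intro s hs hsc a
    have hset : {v : Fin n → M |
        (∀ x ∈ s, v x = a x) ∧ (∀ i, v ∘ e i ∈ SA i) ∧ ∀ j, v ∘ f j ∉ SB j} =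
        {v : Fin n → M | (∀ i ∈ s, v i = a i) ∧
          Formula.Realize
            ((BoundedFormula.iInfFinset Finset.univ
                fun i : Fin p => (α i).relabel (Sum.map (e i) id)) ⊓
              (BoundedFormula.iInfFinset Finset.univ fun j : Fin q =>
                ((β j).relabel (Sum.map (f j) id)).not)) (Sum.elim v id)} :=
      Set.ext fun v => and_congr_right fun _ => (hφiff v).symm
    rw [hset]
    exact hk s hs hsc a
  have hinf' : {v : Fin n → M | (∀ i, v ∘ e i ∈ SA i) ∧ ∀ j, v ∘ f j ∉ SB j}.Infinite := by
    have hset : {v : Fin n → M | (∀ i, v ∘ e i ∈ SA i) ∧ ∀ j, v ∘ f j ∉ SB j} =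
        {v : Fin n → M |
          Formula.Realize
            ((BoundedFormula.iInfFinset Finset.univ
                fun i : Fin p => (α i).relabel (Sum.map (e i) id)) ⊓
              (BoundedFormula.iInfFinset Finset.univ fun j : Fin q =>
                ((β j).relabel (Sum.map (f j) id)).not)) (Sum.elim v id)} :=
      Set.ext fun v => (hφiff v).symm
    rw [hset]
    exact hinf
  have hcore := MAaux.core e f he hf SA SB k aa bb hk' haa hbb hinf'
  refine ⟨(1 + ∑ i, aa i) ^ n, fun s hs hsc a => ?_⟩
  have hset : {v : Fin n → M | (∀ i ∈ s, v i = a i) ∧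
      Formula.Realize
        (BoundedFormula.iInfFinset Finset.univ fun i : Fin p => (α i).relabel (Sum.map (e i) id))
        (Sum.elim v id)} =
      {v : Fin n → M | (∀ x ∈ s, v x = a x) ∧ ∀ i, v ∘ e i ∈ SA i} :=
    Set.ext fun v => and_congr_right fun _ => hAiff v
  rw [hset]
  exact hcore s hs hsc a
end

section
/- There exists a computable infinite binary tree R ⊆ List Bool such that no path through R is guessable. -/
/-- `R ⊆ List Bool` is a binary tree if it is closed under initial segments. -/
def IsBinaryTree (R : Set (List Bool)) : Prop :=
  ∀ σ ∈ R, ∀ τ : List Bool, τ <+: σ → τ ∈ R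

/-- The length-`n` initial segment of an infinite binary sequence `x : ℕ → Bool`. -/
def initSeg (x : ℕ → Bool) (n : ℕ) : List Bool :=
  List.ofFn fun i : Fin n => x i

/-- `x : ℕ → Bool` is a path through `R` if every finite initial segment of `x` is in `R`. -/
def IsPath (R : Set (List Bool)) (x : ℕ → Bool) : Prop :=
  ∀ n : ℕ, initSeg x n ∈ R

/-- A sequence `x : ℕ → Bool` is *guessable* if there are a constant `C` and a computable
function `g : ℕ → ℕ → Option (List Bool)` such that for every `n`: every string output by
`g n` has length `n`, the set of strings output by `g n` has at most `C * (n + 1)^2`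
elements, and some output of `g n` is the length-`n` initial segment of `x`. -/
def Guessable (x : ℕ → Bool) : Prop :=
  ∃ (C : ℕ) (g : ℕ → ℕ → Option (List Bool)), Computable₂ g ∧
    ∀ n : ℕ,
      (∀ s σ, g n s = some σ → σ.length = n) ∧
      {σ : List Bool | ∃ s, g n s = some σ}.Finite ∧
      {σ : List Bool | ∃ s, g n s = some σ}.ncard ≤ C * (n + 1) ^ 2 ∧
      ∃ s, g n s = some (initSeg x n)


namespace NoGuess
open Nat.Partrec (Code)
open Nat.Partrec.Code Encodable

/-- Decode a natural number as an optional output string. -/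
def decOut (y : ℕ) : Option (List Bool) := (Encodable.decode (α := Option (List Bool)) y).bind id

/-- Collect the values of the longest fully-defined prefix of a list of options. -/
def collect : List (Option ℕ) → List ℕ
  | [] => []
  | none :: _ => []
  | some y :: l => y :: collect l

@[simp] lemma collect_nil : collect [] = [] := rfl
@[simp] lemma collect_cons_none (l : List (Option ℕ)) : collect (none :: l) = [] := rfl
@[simp] lemma collect_cons_some (y : ℕ) (l : List (Option ℕ)) :
    collect (some y :: l) = y :: collect l := rfl

lemma collect_prefix : ∀ (l l' : List (Option ℕ)), l.length ≤ l'.length →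
    (∀ (i y : ℕ), l[i]? = some (some y) → l'[i]? = some (some y)) →
    collect l <+: collect l'
  | [], _, _, _ => by simp
  | none :: l, l', _, _ => by simp
  | some y :: l, [], h, _ => by simp at h
  | some y :: l, o' :: l', hlen, h => by
      have h0 : o' = some y := by
        have := h 0 y (by simp)
        simpa using this
      subst h0
      simpa using collect_prefix l l' (by simpa using hlen)
        (fun i z hz => by simpa using h (i+1) z (by simpa using hz))

lemma mem_collect : ∀ {l : List (Option ℕ)} {y : ℕ}, y ∈ collect l → some y ∈ l
  | [], y, h => by simp at h
  | none :: l, y, h => by simp at h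
  | some z :: l, y, h => by
      rcases List.mem_cons.1 h with h | h
      · simp [h]
      · exact List.mem_cons_of_mem _ (mem_collect h)

lemma collect_complete : ∀ (l : List (Option ℕ)) (i : ℕ) (y : ℕ),
    (∀ j ≤ i, ∃ z, l[j]? = some (some z)) → l[i]? = some (some y) → y ∈ collect l
  | [], i, y, _, h => by simp at h
  | o :: l, 0, y, _, h => by
      simp at h; subst h; simp
  | o :: l, i + 1, y, hall, h => by
      obtain ⟨z, hz⟩ := hall 0 (Nat.zero_le _)
      simp at hz; subst hz
      simp only [collect_cons_some, List.mem_cons]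
      right
      exact collect_complete l i y
        (fun j hj => by simpa using hall (j+1) (by omega)) (by simpa using h)

end NoGuess
namespace NoGuess
open Nat.Partrec (Code)
open Nat.Partrec.Code Encodable

/-- the code encoded by a requirement index -/
def cd (e : ℕ) : Code := Denumerable.ofNat Code e.unpair.1

/-- the constant encoded by a requirement index -/
def CC (e : ℕ) : ℕ := e.unpair.2

/-- the guess-count bound of requirement `e` at level `n` -/
def KK (e n : ℕ) : ℕ := CC e * (n + 1) ^ 2

/-- requirement `e` is active at level `n` -/
def Active (e n : ℕ) : Prop := CC e * (n + 1) ^ 4 * 2 ^ (2 * e + 4) ≤ 2 ^ n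

instance : ∀ e n, Decidable (Active e n) := fun e n => by unfold Active; infer_instance

/-- step-`m` approximations of the guesses of requirement `e` at level `n` -/
def rawL (e n m : ℕ) : List (Option ℕ) :=
  (List.range m).map fun s => evaln m (cd e) (Nat.pair n s)

/-- the strings guessed by requirement `e` at level `n`, as seen at stage `m` -/
def outL (e n m : ℕ) : List (List Bool) :=
  (collect (rawL e n m)).flatMap fun y => (decOut y).toList

/-- computable version of `List.take` by padding with `false` -/
def pref (τ : List Bool) (n : ℕ) : List Bool := (List.range n).map fun i => τ.getD i false

lemma pref_eq_take {τ : List Bool} {n : ℕ} (h : n ≤ τ.length) : pref τ n = τ.take n := by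
  apply List.ext_getElem
  · simp [pref, h]
  · intro i h1 h2
    have hi : i < τ.length := by simp [pref] at h1; omega
    simp [pref, List.getD, List.getElem?_eq_getElem hi]

@[simp] lemma pref_length (τ : List Bool) (n : ℕ) : (pref τ n).length = n := by simp [pref]

lemma pref_self (τ : List Bool) : pref τ τ.length = τ := by
  rw [pref_eq_take le_rfl, List.take_length]

lemma mem_outL {e n m : ℕ} {τ : List Bool} (h : τ ∈ outL e n m) :
    ∃ s < m, ∃ y, evaln m (cd e) (Nat.pair n s) = some y ∧ decOut y = some τ := by
  simp only [outL, List.mem_flatMap] at h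
  obtain ⟨y, hy, hτ⟩ := h
  have hsome : some y ∈ rawL e n m := mem_collect hy
  simp only [rawL, List.mem_map, List.mem_range] at hsome
  obtain ⟨s, hs, hev⟩ := hsome
  exact ⟨s, hs, y, hev, by simpa using hτ⟩

lemma outL_complete {e n m s y : ℕ} {τ : List Bool} (hs : s < m)
    (hall : ∀ s' ≤ s, (evaln m (cd e) (Nat.pair n s')).isSome)
    (hev : evaln m (cd e) (Nat.pair n s) = some y) (hdec : decOut y = some τ) :
    τ ∈ outL e n m := by
  have hy : y ∈ collect (rawL e n m) := by
    apply collect_complete (rawL e n m) s y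
    · intro j hj
      obtain ⟨z, hz⟩ := Option.isSome_iff_exists.1 (hall j hj)
      exact ⟨z, by simp [rawL, List.getElem?_map, List.getElem?_range (hj.trans_lt hs), hz]⟩
    · simp [rawL, List.getElem?_map, List.getElem?_range hs, hev]
  simp only [outL, List.mem_flatMap]
  exact ⟨y, hy, by simp [hdec]⟩

lemma outL_mono {e n m m' : ℕ} (h : m ≤ m') : outL e n m <+: outL e n m' := by
  have hpre : collect (rawL e n m) <+: collect (rawL e n m') := by
    apply collect_prefix
    · simp [rawL, h]
    · intro i y hy
      have him : i < m := by
        by_contra hc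
        rw [List.getElem?_eq_none (by simp [rawL]; omega)] at hy
        simp at hy
      simp only [rawL, List.getElem?_map, List.getElem?_range him,
        List.getElem?_range (him.trans_le h), Option.map_some] at hy ⊢
      have : y ∈ evaln m (cd e) (Nat.pair n i) := by
        simpa using hy
      have := evaln_mono h this
      simpa using this
  obtain ⟨t, ht⟩ := hpre
  exact ⟨t.flatMap fun y => (decOut y).toList, by rw [outL, outL, ← ht, List.flatMap_append]⟩

/-- a string is killed if some active requirement has guessed (an initial segment of) it
within the count bound -/
def Killed (τ : List Bool) : Prop :=
  ∃ e ≤ τ.length, ∃ n ≤ τ.length, Active e n ∧ pref τ n ∈ outL e n τ.length ∧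
    (outL e n τ.length).toFinset.card ≤ KK e n

/-- the tree: strings none of whose initial segments is killed -/
def Rtree : Set (List Bool) := {σ | ∀ n ≤ σ.length, ¬ Killed (pref σ n)}

lemma take_pref {σ : List Bool} {n k : ℕ} (h : k ≤ n) (hn : n ≤ σ.length) :
    pref (pref σ n) k = pref σ k := by
  rw [pref_eq_take (by simpa using h), pref_eq_take hn, pref_eq_take (h.trans hn),
    List.take_take, min_eq_left h]

lemma isBinaryTree_Rtree : ∀ σ ∈ Rtree, ∀ τ : List Bool, τ <+: σ → τ ∈ Rtree := by
  intro σ hσ τ hpre n hn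
  have hlen : τ.length ≤ σ.length := hpre.length_le
  have : pref τ n = pref σ n := by
    rw [pref_eq_take hn, pref_eq_take (hn.trans hlen)]
    obtain ⟨t, rfl⟩ := hpre
    rw [List.take_append, Nat.sub_eq_zero_of_le hn, List.take_zero,
      List.append_nil]
  rw [this]
  exact hσ n (hn.trans hlen)

end NoGuess
namespace NoGuess
open Nat.Partrec (Code)
open Nat.Partrec.Code Encodable Finset

/-! ### Counting: the tree has nodes at every level -/

def Fm (m : ℕ) : Finset (List Bool) :=
  (Finset.univ : Finset (Fin m → Bool)).image fun f => List.ofFn f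

lemma mem_Fm {m : ℕ} {σ : List Bool} : σ ∈ Fm m ↔ σ.length = m := by
  constructor
  · rintro h
    simp only [Fm, Finset.mem_image] at h
    obtain ⟨f, _, rfl⟩ := h
    simp
  · rintro rfl
    simp only [Fm, Finset.mem_image]
    exact ⟨fun i => σ[i], Finset.mem_univ _, List.ofFn_getElem⟩

lemma card_Fm (m : ℕ) : (Fm m).card = 2 ^ m := by
  rw [Fm, Finset.card_image_of_injective _ List.ofFn_injective]
  simp [Finset.card_univ]

/-- The stable finite set of guesses of requirement `e` at level `n`, up to stage `m`. -/
def SS (e n m : ℕ) : Finset (List Bool) :=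
  (outL e n (Nat.findGreatest (fun j => (outL e n j).toFinset.card ≤ KK e n) m)).toFinset

@[simp] lemma outL_zero (e n : ℕ) : outL e n 0 = [] := rfl

lemma card_SS (e n m : ℕ) : (SS e n m).card ≤ KK e n := by
  have h0 : (outL e n 0).toFinset.card ≤ KK e n := by rw [outL_zero]; simp
  exact Nat.findGreatest_spec (P := fun j => (outL e n j).toFinset.card ≤ KK e n)
    (Nat.zero_le m) h0

lemma mem_SS {e n m j : ℕ} (hj : j ≤ m) (hcard : (outL e n j).toFinset.card ≤ KK e n)
    {τ : List Bool} (hτ : τ ∈ outL e n j) : τ ∈ SS e n m := by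
  have hle : j ≤ Nat.findGreatest (fun j => (outL e n j).toFinset.card ≤ KK e n) m :=
    Nat.le_findGreatest hj hcard
  exact List.mem_toFinset.2 ((outL_mono hle).subset hτ)

open Classical in
lemma card_piece {e n' m : ℕ} (h : n' ≤ m) :
    ((Fm m).filter fun σ => pref σ n' ∈ SS e n' m).card ≤ KK e n' * 2 ^ (m - n') := by
  classical
  have hinj : ∀ σ ∈ (Fm m).filter fun σ => pref σ n' ∈ SS e n' m,
      (pref σ n', σ.drop n') ∈ (SS e n' m) ×ˢ Fm (m - n') := by
    intro σ hσ
    simp only [Finset.mem_filter] at hσ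
    refine Finset.mem_product.2 ⟨hσ.2, mem_Fm.2 ?_⟩
    simp [mem_Fm.1 hσ.1]
  have hcard := Finset.card_le_card_of_injOn _ hinj ?_
  · refine hcard.trans ?_
    rw [Finset.card_product, card_Fm]
    exact Nat.mul_le_mul_right _ (card_SS e n' m)
  · intro σ1 h1 σ2 h2 heq
    simp only [Finset.mem_coe, Finset.mem_filter] at h1 h2
    have l1 : σ1.length = m := mem_Fm.1 h1.1
    have l2 : σ2.length = m := mem_Fm.1 h2.1
    have e1 : pref σ1 n' = pref σ2 n' := congrArg Prod.fst heq
    have e2 : σ1.drop n' = σ2.drop n' := congrArg Prod.snd heq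
    rw [pref_eq_take (by omega), pref_eq_take (by omega)] at e1
    rw [← List.take_append_drop n' σ1, ← List.take_append_drop n' σ2, e1, e2]

lemma sum_inv_sq (k : ℕ) : ∑ i ∈ Finset.range k, (1:ℝ)/((i:ℝ)+1)^2 ≤ 2 - 2/((k:ℝ)+1) := by
  induction k with
  | zero => simp
  | succ k ih =>
    rw [Finset.sum_range_succ]
    have h1 : (0:ℝ) < (k:ℝ) + 1 := by positivity
    have h2 : (0:ℝ) < (k:ℝ) + 2 := by positivity
    have key : (1:ℝ)/((k:ℝ)+1)^2 ≤ 2/((k:ℝ)+1) - 2/((k:ℝ)+2) := by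
      rw [div_sub_div _ _ (ne_of_gt h1) (ne_of_gt h2), div_le_div_iff₀ (by positivity) (by positivity)]
      ring_nf
      nlinarith
    push_cast
    have hc : ((k:ℝ)+1+1) = (k:ℝ)+2 := by ring
    rw [hc]
    linarith

lemma sum_geo (k : ℕ) : ∑ e ∈ Finset.range k, (1:ℝ)/2^(2*e+4) ≤ 1/8 := by
  have heq : ∀ e : ℕ, (1:ℝ)/2^(2*e+4) = (1/16) * (1/4)^e := by
    intro e
    rw [pow_add, pow_mul]
    norm_num
    rw [one_div, inv_pow]
  rw [Finset.sum_congr rfl fun e _ => heq e, ← Finset.mul_sum]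
  have := geom_sum_eq (by norm_num : (1/4:ℝ) ≠ 1) k
  rw [this]
  have hp : (0:ℝ) ≤ (1/4:ℝ)^k := by positivity
  have hl : ((1/4:ℝ)^k - 1)/((1/4:ℝ) - 1) ≤ 4/3 := by
    rw [div_le_iff_of_neg (by norm_num)]
    linarith
  linarith

end NoGuess
namespace NoGuess
open Nat.Partrec (Code)
open Nat.Partrec.Code Encodable Finset

open Classical in
lemma bad_card_lt (m : ℕ) : ((Fm m).filter fun σ => σ ∉ Rtree).card < 2 ^ m := by
  classical
  have hsub : ((Fm m).filter fun σ => σ ∉ Rtree) ⊆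
      (Finset.range (m+1) ×ˢ Finset.range (m+1)).biUnion fun p =>
        (Fm m).filter fun σ => Active p.1 p.2 ∧ pref σ p.2 ∈ SS p.1 p.2 m := by
    intro σ hσ
    simp only [Finset.mem_filter] at hσ
    obtain ⟨hσF, hσR⟩ := hσ
    have hlen := mem_Fm.1 hσF
    rw [Rtree, Set.mem_setOf_eq] at hσR
    push_neg at hσR
    obtain ⟨n0, hn0, hkill⟩ := hσR
    obtain ⟨e, he, n', hn', hact, hmem, hcard⟩ := hkill
    rw [pref_length] at he hn' hmem hcard
    have hpp : pref (pref σ n0) n' = pref σ n' := take_pref hn' hn0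
    rw [hpp] at hmem
    have hSS : pref σ n' ∈ SS e n' m := mem_SS (hn0.trans hlen.le) hcard hmem
    refine Finset.mem_biUnion.2 ⟨(e, n'), ?_, ?_⟩
    · rw [Finset.mem_product]
      constructor <;> · rw [Finset.mem_range]; omega
    · rw [Finset.mem_filter]
      exact ⟨hσF, hact, hSS⟩
  have h1 := (Finset.card_le_card hsub).trans Finset.card_biUnion_le
  -- now a real-valued estimate
  have hterm : ∀ p ∈ Finset.range (m+1) ×ˢ Finset.range (m+1),
      (((Fm m).filter fun σ => Active p.1 p.2 ∧ pref σ p.2 ∈ SS p.1 p.2 m).card : ℝ) ≤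
        ((2:ℝ)^m * ((1:ℝ)/2^(2*p.1+4))) * ((1:ℝ)/((p.2:ℝ)+1)^2) := by
    rintro ⟨e, n'⟩ hp
    rw [Finset.mem_product, Finset.mem_range, Finset.mem_range] at hp
    have hn'm : n' ≤ m := by omega
    by_cases hact : Active e n'
    · have hsub2 : ((Fm m).filter fun σ => Active e n' ∧ pref σ n' ∈ SS e n' m) ⊆
          ((Fm m).filter fun σ => pref σ n' ∈ SS e n' m) := by
        intro σ hσ
        rw [Finset.mem_filter] at hσ ⊢
        exact ⟨hσ.1, hσ.2.2⟩
      have hc := (Finset.card_le_card hsub2).trans (card_piece hn'm)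
      have hcR : ((KK e n' * 2 ^ (m - n') : ℕ) : ℝ) ≤
          ((2:ℝ)^m * ((1:ℝ)/2^(2*e+4))) * ((1:ℝ)/((n':ℝ)+1)^2) := by
        have hactR : (CC e : ℝ) * ((n':ℝ)+1)^4 * 2^(2*e+4) ≤ (2:ℝ)^n' := by
          have := hact
          rw [Active] at this
          calc (CC e : ℝ) * ((n':ℝ)+1)^4 * 2^(2*e+4)
              = ((CC e * (n'+1)^4 * 2^(2*e+4) : ℕ) : ℝ) := by push_cast; ring
            _ ≤ ((2^n' : ℕ) : ℝ) := by exact_mod_cast this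
            _ = (2:ℝ)^n' := by push_cast; ring
        have h2m : (2:ℝ)^(m-n') * (2:ℝ)^n' = (2:ℝ)^m := by
          rw [← pow_add, Nat.sub_add_cancel hn'm]
        have hpos1 : (0:ℝ) < ((n':ℝ)+1)^2 := by positivity
        have hpos2 : (0:ℝ) < (2:ℝ)^(2*e+4) := by positivity
        have hKK : ((KK e n' * 2 ^ (m - n') : ℕ) : ℝ)
            = (CC e : ℝ) * ((n':ℝ)+1)^2 * (2:ℝ)^(m-n') := by
          rw [KK]; push_cast; ring
        rw [hKK]
        rw [mul_one_div, mul_one_div, div_div, le_div_iff₀ (by positivity)]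
        calc (CC e : ℝ) * ((n':ℝ)+1)^2 * (2:ℝ)^(m-n') * ((2:ℝ)^(2*e+4) * ((n':ℝ)+1)^2)
            = ((CC e : ℝ) * ((n':ℝ)+1)^4 * 2^(2*e+4)) * (2:ℝ)^(m-n') := by ring
          _ ≤ (2:ℝ)^n' * (2:ℝ)^(m-n') := by
              apply mul_le_mul_of_nonneg_right hactR (by positivity)
          _ = (2:ℝ)^m := by rw [mul_comm]; exact h2m
      calc (((Fm m).filter fun σ => Active e n' ∧ pref σ n' ∈ SS e n' m).card : ℝ)
          ≤ ((KK e n' * 2 ^ (m - n') : ℕ) : ℝ) := by exact_mod_cast hc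
        _ ≤ _ := hcR
    · have : ((Fm m).filter fun σ => Active e n' ∧ pref σ n' ∈ SS e n' m) = ∅ := by
        apply Finset.filter_eq_empty_iff.2
        intro σ _ h
        exact hact h.1
      rw [this]
      simp only [Finset.card_empty, Nat.cast_zero]
      positivity
  have hsum : ((∑ p ∈ Finset.range (m+1) ×ˢ Finset.range (m+1),
      ((Fm m).filter fun σ => Active p.1 p.2 ∧ pref σ p.2 ∈ SS p.1 p.2 m).card : ℕ) : ℝ) ≤
      (2:ℝ)^m * (1/4) := by
    push_cast
    calc ∑ p ∈ Finset.range (m+1) ×ˢ Finset.range (m+1),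
        (((Fm m).filter fun σ => Active p.1 p.2 ∧ pref σ p.2 ∈ SS p.1 p.2 m).card : ℝ)
        ≤ ∑ p ∈ Finset.range (m+1) ×ˢ Finset.range (m+1),
          ((2:ℝ)^m * ((1:ℝ)/2^(2*p.1+4))) * ((1:ℝ)/((p.2:ℝ)+1)^2) :=
          Finset.sum_le_sum hterm
      _ = (2:ℝ)^m * ((∑ e ∈ Finset.range (m+1), (1:ℝ)/2^(2*e+4)) *
          (∑ n' ∈ Finset.range (m+1), (1:ℝ)/((n':ℝ)+1)^2)) := by
          rw [Finset.sum_product]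
          show ∑ x ∈ Finset.range (m+1), ∑ y ∈ Finset.range (m+1),
            ((2:ℝ)^m * ((1:ℝ)/2^(2*x+4))) * ((1:ℝ)/((y:ℝ)+1)^2) = _
          rw [← Finset.sum_mul_sum]
          rw [← Finset.mul_sum]
          ring
      _ ≤ (2:ℝ)^m * ((1/8) * 2) := by
          apply mul_le_mul_of_nonneg_left _ (by positivity)
          have hg := sum_geo (m+1)
          have hs : ∑ n' ∈ Finset.range (m+1), (1:ℝ)/((n':ℝ)+1)^2 ≤ 2 := by
            have h1 := sum_inv_sq (m+1)
            have h2 : (0:ℝ) ≤ 2/(((m+1:ℕ):ℝ)+1) := by positivity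
            linarith
          have hnn : (0:ℝ) ≤ ∑ n' ∈ Finset.range (m+1), (1:ℝ)/((n':ℝ)+1)^2 := by
            positivity
          apply mul_le_mul hg hs hnn (by norm_num)
      _ = (2:ℝ)^m * (1/4) := by ring
  have hfin : (((Fm m).filter fun σ => σ ∉ Rtree).card : ℝ) < ((2^m : ℕ) : ℝ) := by
    calc (((Fm m).filter fun σ => σ ∉ Rtree).card : ℝ) ≤ _ := by exact_mod_cast h1
      _ ≤ (2:ℝ)^m * (1/4) := hsum
      _ < (2:ℝ)^m := by
          have : (0:ℝ) < (2:ℝ)^m := by positivity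
          linarith
      _ = ((2^m : ℕ) : ℝ) := by push_cast; ring
  exact_mod_cast hfin

lemma levels_nonempty (m : ℕ) : ∃ σ ∈ Rtree, σ.length = m := by
  classical
  have h := bad_card_lt m
  have hsplit := Finset.card_filter_add_card_filter_not
    (s := Fm m) (p := fun σ => σ ∈ Rtree)
  have hcard : ((Fm m).filter fun σ => σ ∈ Rtree).card > 0 := by
    rw [card_Fm] at hsplit
    have : ((Fm m).filter fun σ => ¬ σ ∈ Rtree).card < 2 ^ m := h
    omega
  obtain ⟨σ, hσ⟩ := Finset.card_pos.1 hcard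
  rw [Finset.mem_filter] at hσ
  exact ⟨σ, hσ.2, mem_Fm.1 hσ.1⟩

end NoGuess
namespace NoGuess
open Nat.Partrec (Code)
open Nat.Partrec.Code Encodable

lemma pow5_le {n : ℕ} (h : 30 ≤ n) : (n + 1) ^ 5 ≤ 2 ^ n := by
  induction n, h using Nat.le_induction with
  | base => norm_num
  | succ n hn ih =>
    have h900 : 900 ≤ n * n := by nlinarith
    have h3 : (0:ℕ) ≤ n^3 := by positivity
    have h2 : n * n * 30 ≤ n * n * n := by nlinarith
    have h1 : (n + 2) ^ 5 ≤ 2 * (n + 1) ^ 5 := by nlinarith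
    calc (n + 1 + 1) ^ 5 = (n + 2) ^ 5 := by ring_nf
      _ ≤ 2 * (n + 1) ^ 5 := h1
      _ ≤ 2 * 2 ^ n := by omega
      _ = 2 ^ (n + 1) := by ring

lemma poly_le_exp {A n : ℕ} (hA : A ≤ n) (h30 : 30 ≤ n) : A * (n + 1) ^ 4 ≤ 2 ^ n :=
  calc A * (n + 1) ^ 4 ≤ (n + 1) * (n + 1) ^ 4 := by
        exact Nat.mul_le_mul_right _ (by omega)
    _ = (n + 1) ^ 5 := by ring
    _ ≤ 2 ^ n := pow5_le h30

@[simp] lemma initSeg_length (x : ℕ → Bool) (n : ℕ) : (initSeg x n).length = n := by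
  simp [initSeg]

lemma pref_initSeg (x : ℕ → Bool) {n m : ℕ} (h : n ≤ m) :
    pref (initSeg x m) n = initSeg x n := by
  rw [pref_eq_take (by simp [h])]
  apply List.ext_getElem
  · simp [h]
  · intro i h1 h2
    simp [initSeg, List.getElem_take, List.getElem_ofFn]

lemma no_guessable_path (x : ℕ → Bool) (hx : IsPath Rtree x) : ¬ Guessable x := by
  rintro ⟨C, g, hg, hprop⟩
  obtain ⟨c₀, hc₀⟩ := exists_code.1 hg
  have heval : ∀ n s : ℕ, eval c₀ (Nat.pair n s) =
      Part.some (Encodable.encode (g n s)) := by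
    intro n s
    have hdec : (Encodable.decode (Nat.pair n s) : Option (ℕ × ℕ)) = some (n, s) := by
      have henc : Encodable.encode ((n, s) : ℕ × ℕ) = Nat.pair n s := by
        simp [Encodable.encode_prod_val]
      rw [← henc, Encodable.encodek]
    rw [hc₀]
    simp [hdec]
  have hconv : ∀ n s : ℕ, ∃ k, ∀ s' ≤ s, (evaln k c₀ (Nat.pair n s')).isSome := by
    intro n s
    induction s with
    | zero =>
      obtain ⟨k, hk⟩ := evaln_complete.1
        (by rw [heval n 0]; exact Part.mem_some _ : Encodable.encode (g n 0) ∈ eval c₀ (Nat.pair n 0))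
      exact ⟨k, fun s' hs' => by
        rw [Nat.le_zero.1 hs']
        exact Option.isSome_iff_exists.2 ⟨_, hk⟩⟩
    | succ s ih =>
      obtain ⟨k1, hk1⟩ := ih
      obtain ⟨k2, hk2⟩ := evaln_complete.1
        (by rw [heval n (s+1)]; exact Part.mem_some _ :
          Encodable.encode (g n (s+1)) ∈ eval c₀ (Nat.pair n (s+1)))
      refine ⟨max k1 k2, fun s' hs' => ?_⟩
      rcases Nat.lt_or_ge s' (s+1) with h | h
      · obtain ⟨y, hy⟩ := Option.isSome_iff_exists.1 (hk1 s' (by omega))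
        exact Option.isSome_iff_exists.2 ⟨y, evaln_mono (le_max_left _ _) hy⟩
      · have : s' = s + 1 := by omega
        subst this
        exact Option.isSome_iff_exists.2 ⟨_, evaln_mono (le_max_right _ _) hk2⟩
  set e := Nat.pair (Encodable.encode c₀) (C + 1) with he
  have hcd : cd e = c₀ := by
    rw [cd, he, Nat.unpair_pair]
    exact Denumerable.ofNat_encode c₀
  have hCC : CC e = C + 1 := by rw [CC, he, Nat.unpair_pair]
  set n := max ((C + 1) * 2 ^ (2 * e + 4)) 30 with hn
  have hact : Active e n := by
    rw [Active, hCC]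
    calc (C + 1) * (n + 1) ^ 4 * 2 ^ (2 * e + 4)
        = ((C + 1) * 2 ^ (2 * e + 4)) * (n + 1) ^ 4 := by ring
      _ ≤ 2 ^ n := poly_le_exp (le_max_left _ _) (le_max_right _ _)
  obtain ⟨hlen, hfin, hcard, s, hs⟩ := hprop n
  obtain ⟨k, hk⟩ := hconv n s
  set m := max (max e n) (max (s + 1) k) with hm
  have hem : e ≤ m := le_trans (le_max_left _ _) (le_max_left _ _)
  have hnm : n ≤ m := le_trans (le_max_right _ _) (le_max_left _ _)
  have hsm : s < m := lt_of_lt_of_le (Nat.lt_succ_self s) (le_trans (le_max_left _ _) (le_max_right _ _))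
  have hkm : k ≤ m := le_trans (le_max_right _ _) (le_max_right _ _)
  have hall : ∀ s' ≤ s, (evaln m (cd e) (Nat.pair n s')).isSome := by
    intro s' hs'
    obtain ⟨y, hy⟩ := Option.isSome_iff_exists.1 (hk s' hs')
    rw [hcd]
    exact Option.isSome_iff_exists.2 ⟨y, evaln_mono hkm hy⟩
  have hev : evaln m (cd e) (Nat.pair n s) = some (Encodable.encode (g n s)) := by
    obtain ⟨y, hy⟩ := Option.isSome_iff_exists.1 (hall s le_rfl)
    have hym : y ∈ evaln m (cd e) (Nat.pair n s) := hy
    have hsound := evaln_sound (hcd ▸ hym)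
    rw [heval n s] at hsound
    have := Part.mem_some_iff.1 hsound
    rw [hy, this]
  have hdecout : decOut (Encodable.encode (g n s)) = some (initSeg x n) := by
    rw [decOut, Encodable.encodek]
    simp [hs]
  have hmem : initSeg x n ∈ outL e n m := outL_complete hsm hall hev hdecout
  have hsubG : ∀ τ ∈ outL e n m, τ ∈ {σ : List Bool | ∃ s, g n s = some σ} := by
    intro τ hτ
    obtain ⟨s', _, y, hy, hdy⟩ := mem_outL hτ
    have hym : y ∈ evaln m (cd e) (Nat.pair n s') := hy
    have hsound := evaln_sound (hcd ▸ hym)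
    rw [heval n s'] at hsound
    have hyy := Part.mem_some_iff.1 hsound
    subst hyy
    rw [decOut, Encodable.encodek] at hdy
    simp at hdy
    exact ⟨s', hdy⟩
  have hcount : (outL e n m).toFinset.card ≤ KK e n := by
    have hsubF : (outL e n m).toFinset ⊆ hfin.toFinset := by
      intro τ hτ
      rw [Set.Finite.mem_toFinset]
      exact hsubG τ (List.mem_toFinset.1 hτ)
    calc (outL e n m).toFinset.card ≤ hfin.toFinset.card := Finset.card_le_card hsubF
      _ = {σ : List Bool | ∃ s, g n s = some σ}.ncard :=
          (Set.ncard_eq_toFinset_card _ hfin).symm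
      _ ≤ C * (n + 1) ^ 2 := hcard
      _ ≤ KK e n := by rw [KK, hCC]; exact Nat.mul_le_mul_right _ (by omega)
  have hkilled : Killed (initSeg x m) := by
    refine ⟨e, by simp [hem], n, by simp [hnm], hact, ?_, ?_⟩
    · rw [pref_initSeg x hnm, initSeg_length]
      exact hmem
    · rw [initSeg_length]
      exact hcount
  have hmemR := hx m
  rw [Rtree, Set.mem_setOf_eq] at hmemR
  have hnk := hmemR (initSeg x m).length le_rfl
  rw [pref_self] at hnk
  exact hnk hkilled

end NoGuess
namespace NoGuess
open Nat.Partrec (Code)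
open Nat.Partrec.Code Encodable

/-! ### Computability of the tree -/

/-- number of distinct elements of a list, computed by a fold -/
def dl (l : List (List Bool)) : ℕ :=
  (l.foldl (fun acc a => if a ∈ acc then acc else a :: acc) []).length

lemma dl_aux (l : List (List Bool)) : ∀ acc : List (List Bool), acc.Nodup →
    (l.foldl (fun acc a => if a ∈ acc then acc else a :: acc) acc).Nodup ∧
    (l.foldl (fun acc a => if a ∈ acc then acc else a :: acc) acc).toFinset =
      acc.toFinset ∪ l.toFinset := by
  induction l with
  | nil => intro acc h; simp [h]
  | cons a l ih =>
    intro acc hacc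
    rw [List.foldl_cons]
    by_cases hmem : a ∈ acc
    · rw [if_pos hmem]
      obtain ⟨h1, h2⟩ := ih acc hacc
      refine ⟨h1, ?_⟩
      rw [h2, List.toFinset_cons, Finset.union_insert,
        Finset.insert_eq_self.2 (Finset.mem_union_left _ (List.mem_toFinset.2 hmem))]
    · rw [if_neg hmem]
      obtain ⟨h1, h2⟩ := ih (a :: acc) (List.nodup_cons.2 ⟨hmem, hacc⟩)
      refine ⟨h1, ?_⟩
      rw [h2, List.toFinset_cons, List.toFinset_cons, Finset.union_insert,
        Finset.insert_union]

lemma dl_eq (l : List (List Bool)) : dl l = l.toFinset.card := by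
  obtain ⟨h1, h2⟩ := dl_aux l [] (by simp)
  rw [dl, ← List.toFinset_card_of_nodup h1, h2]
  simp

lemma collect_eq_foldr (l : List (Option ℕ)) :
    collect l = l.foldr (fun o r => Option.casesOn o [] fun y => y :: r) [] := by
  induction l with
  | nil => rfl
  | cons o l ih => cases o <;> simp [collect, ih]

open Primrec in
lemma h_decOut : Primrec decOut :=
  Primrec.option_bind Primrec.decode Primrec.snd.to₂

open Primrec in
lemma h_collect : Primrec collect := by
  have hh : Primrec fun a : List (Option ℕ) × (Option ℕ × List ℕ) =>
      (Option.casesOn a.2.1 [] fun y => y :: a.2.2 : List ℕ) :=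
    Primrec.option_casesOn (fst.comp snd) (const ([] : List ℕ))
      ((list_cons.comp snd (snd.comp (snd.comp fst))).to₂)
  have h2 := Primrec.list_foldr (f := fun l : List (Option ℕ) => l)
    (g := fun _ => ([] : List ℕ)) (h := fun _ p => Option.casesOn p.1 [] fun y => y :: p.2)
    Primrec.id (const ([] : List ℕ)) hh.to₂
  exact h2.of_eq fun l => (collect_eq_foldr l).symm

open Primrec in
lemma h_outL : Primrec fun q : ℕ × ℕ × ℕ => outL q.1 q.2.1 q.2.2 := by
  have h_rawL : Primrec fun q : ℕ × ℕ × ℕ => rawL q.1 q.2.1 q.2.2 := by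
    have hbody : Primrec fun x : (ℕ × ℕ × ℕ) × ℕ =>
        evaln x.1.2.2 (cd x.1.1) (Nat.pair x.1.2.1 x.2) := by
      have hm : Primrec fun x : (ℕ × ℕ × ℕ) × ℕ => x.1.2.2 := snd.comp (snd.comp fst)
      have hcode : Primrec fun x : (ℕ × ℕ × ℕ) × ℕ => cd x.1.1 :=
        (Primrec.ofNat Code).comp (fst.comp (Primrec.unpair.comp (fst.comp fst)))
      have hinput : Primrec fun x : (ℕ × ℕ × ℕ) × ℕ => Nat.pair x.1.2.1 x.2 :=
        Primrec₂.natPair.comp (fst.comp (snd.comp fst)) snd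
      exact primrec_evaln.comp ((hm.pair hcode).pair hinput)
    have := Primrec.list_map (Primrec.list_range.comp (snd.comp snd)) hbody.to₂
    exact this.of_eq fun q => rfl
  have h_toList : Primrec fun x : (ℕ × ℕ × ℕ) × List Bool => [x.2] :=
    list_cons.comp snd (const [])
  have hg : Primrec fun x : (ℕ × ℕ × ℕ) × ℕ => (decOut x.2).toList := by
    have := Primrec.option_casesOn (h_decOut.comp snd)
      (const ([] : List (List Bool)))
      ((list_cons.comp snd (const [])).to₂ :
        Primrec₂ fun (_ : (ℕ × ℕ × ℕ) × ℕ) (τ : List Bool) => [τ])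
    exact this.of_eq fun x => by cases decOut x.2 <;> rfl
  have := Primrec.list_flatMap (h_collect.comp h_rawL) hg.to₂
  exact this.of_eq fun q => rfl

open Primrec in
lemma h_pref : Primrec₂ pref := by
  have := Primrec.list_map (Primrec.list_range.comp snd)
    (((Primrec.list_getD false).comp (fst.comp fst) snd).to₂ :
      Primrec₂ fun (p : List Bool × ℕ) (i : ℕ) => p.1.getD i false)
  exact this.of_eq fun p => rfl

open Primrec in
lemma h_dl : Primrec dl := by
  have hmem : PrimrecPred fun x : List (List Bool) × (List (List Bool) × List Bool) =>
      x.2.2 ∈ x.2.1 := by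
    have hsnd2 : Primrec fun x : List (List Bool) × (List (List Bool) × List Bool) =>
        x.2.2 := snd.comp snd
    have hfs : Primrec fun x : List (List Bool) × (List (List Bool) × List Bool) =>
        x.2.1 := fst.comp snd
    have hidx := Primrec.list_idxOf.comp hsnd2 hfs
    have hlen2 := Primrec.list_length.comp hfs
    have := PrimrecRel.comp Primrec.nat_lt hidx hlen2
    exact this.of_eq fun x => by
      rw [lawful_beq_subsingleton instBEqOfDecidableEq List.instBEq]; exact List.idxOf_lt_length_iff
  have hh : Primrec fun x : List (List Bool) × (List (List Bool) × List Bool) =>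
      if x.2.2 ∈ x.2.1 then x.2.1 else x.2.2 :: x.2.1 :=
    Primrec.ite hmem (fst.comp snd) (list_cons.comp (snd.comp snd) (fst.comp snd))
  have h2 := Primrec.list_foldl (f := fun l : List (List Bool) => l)
    (g := fun _ => ([] : List (List Bool)))
    (h := fun _ p => if p.2 ∈ p.1 then p.1 else p.2 :: p.1)
    Primrec.id (const ([] : List (List Bool))) hh.to₂
  exact (list_length.comp h2).of_eq fun l => rfl

open Primrec in
lemma h_pow : Primrec₂ ((· ^ ·) : ℕ → ℕ → ℕ) := Primrec₂.unpaired'.1 Nat.Primrec.pow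

open Primrec in
lemma h_CC : Primrec CC := snd.comp Primrec.unpair

open Primrec in
lemma h_KK : Primrec fun p : ℕ × ℕ => KK p.1 p.2 := by
  have := nat_mul.comp (h_CC.comp (fst (β := ℕ)))
    (h_pow.comp (succ.comp snd) (const 2))
  exact this.of_eq fun p => rfl

open Primrec in
lemma h_active : PrimrecPred fun p : ℕ × ℕ => Active p.1 p.2 := by
  have hlhs : Primrec fun p : ℕ × ℕ => CC p.1 * (p.2 + 1) ^ 4 * 2 ^ (2 * p.1 + 4) :=
    nat_mul.comp
      (nat_mul.comp (h_CC.comp fst) (h_pow.comp (succ.comp snd) (const 4)))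
      (h_pow.comp (const 2) (nat_add.comp (nat_mul.comp (const 2) fst) (const 4)))
  have hrhs : Primrec fun p : ℕ × ℕ => 2 ^ p.2 := h_pow.comp (const 2) snd
  have := PrimrecRel.comp Primrec.nat_le hlhs hrhs
  exact this.of_eq fun p => Iff.rfl

/-- Boolean test for the kill condition of a single requirement pair. -/
def condB (τ : List Bool) (p : ℕ × ℕ) : Bool :=
  decide (Active p.1 p.2) && decide (pref τ p.2 ∈ outL p.1 p.2 τ.length) &&
    decide (dl (outL p.1 p.2 τ.length) ≤ KK p.1 p.2)

open Primrec in
lemma h_condB : Primrec₂ condB := by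
  have houtl : Primrec fun x : List Bool × (ℕ × ℕ) => outL x.2.1 x.2.2 x.1.length :=
    h_outL.comp ((fst.comp snd).pair ((snd.comp snd).pair (list_length.comp fst)))
  have hb1 : Primrec fun x : List Bool × (ℕ × ℕ) => decide (Active x.2.1 x.2.2) :=
    PrimrecPred.decide (PrimrecPred.comp h_active snd)
  have hmem : PrimrecPred fun x : List Bool × (ℕ × ℕ) =>
      pref x.1 x.2.2 ∈ outL x.2.1 x.2.2 x.1.length := by
    have hprefx : Primrec fun x : List Bool × (ℕ × ℕ) => pref x.1 x.2.2 :=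
      h_pref.comp fst (snd.comp snd)
    have hidx := Primrec.list_idxOf.comp hprefx houtl
    have hlen2 := Primrec.list_length.comp houtl
    have := PrimrecRel.comp Primrec.nat_lt hidx hlen2
    exact this.of_eq fun x => by
      rw [lawful_beq_subsingleton instBEqOfDecidableEq List.instBEq]; exact List.idxOf_lt_length_iff
  have hb3 : Primrec fun x : List Bool × (ℕ × ℕ) =>
      decide (dl (outL x.2.1 x.2.2 x.1.length) ≤ KK x.2.1 x.2.2) :=
    PrimrecPred.decide (PrimrecRel.comp Primrec.nat_le (h_dl.comp houtl) (h_KK.comp snd))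
  have := Primrec.and.comp (Primrec.and.comp hb1 hmem.decide) hb3
  exact this.of_eq fun x => rfl

/-- the list of requirement pairs considered at level `L` -/
def pairsL (L : ℕ) : List (ℕ × ℕ) :=
  (List.range (L + 1)).flatMap fun e => (List.range (L + 1)).map fun n => (e, n)

open Primrec in
lemma h_pairsL : Primrec pairsL := by
  have hg : Primrec fun x : ℕ × ℕ => (List.range (x.1 + 1)).map fun n => (x.2, n) := by
    have := Primrec.list_map (Primrec.list_range.comp (succ.comp fst))
      ((Primrec₂.pair.comp (snd.comp fst) snd).to₂ :
        Primrec₂ fun (x : ℕ × ℕ) (n : ℕ) => (x.2, n))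
    exact this.of_eq fun x => rfl
  have := Primrec.list_flatMap (Primrec.list_range.comp succ) hg.to₂
  exact this.of_eq fun L => rfl

/-- Boolean test for being killed. -/
def killedB (τ : List Bool) : Bool :=
  (pairsL τ.length).foldl (fun b p => b || condB τ p) false

open Primrec in
lemma h_killedB : Primrec killedB := by
  have hh : Primrec fun x : List Bool × (Bool × (ℕ × ℕ)) => x.2.1 || condB x.1 x.2.2 :=
    Primrec.or.comp (fst.comp snd) (h_condB.comp fst (snd.comp snd))
  have := Primrec.list_foldl (h_pairsL.comp list_length) (const false) hh.to₂
  exact this.of_eq fun τ => rfl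

/-- Boolean test for membership in the tree. -/
def memB (σ : List Bool) : Bool :=
  (List.range (σ.length + 1)).foldl (fun b n => b && !killedB (pref σ n)) true

open Primrec in
lemma h_memB : Primrec memB := by
  have hh : Primrec fun x : List Bool × (Bool × ℕ) => x.2.1 && !killedB (pref x.1 x.2.2) :=
    Primrec.and.comp (fst.comp snd)
      (Primrec.not.comp (h_killedB.comp (h_pref.comp fst (snd.comp snd))))
  have := Primrec.list_foldl (Primrec.list_range.comp (succ.comp list_length))
    (const true) hh.to₂
  exact this.of_eq fun σ => rfl

lemma foldl_or_eq {α : Type*} (f : α → Bool) :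
    ∀ (l : List α) (b : Bool), (l.foldl (fun b a => b || f a) b = true) ↔
      (b = true ∨ ∃ a ∈ l, f a = true)
  | [], b => by simp
  | a :: l, b => by
    rw [List.foldl_cons, foldl_or_eq f l (b || f a)]
    simp only [Bool.or_eq_true, List.mem_cons]
    constructor
    · rintro (hb | ⟨c, hc, hfc⟩)
      · rcases hb with hb | ha
        · exact Or.inl hb
        · exact Or.inr ⟨a, Or.inl rfl, ha⟩
      · exact Or.inr ⟨c, Or.inr hc, hfc⟩
    · rintro (hb | ⟨c, (rfl | hc), hfc⟩)
      · exact Or.inl (Or.inl hb)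
      · exact Or.inl (Or.inr hfc)
      · exact Or.inr ⟨c, hc, hfc⟩

lemma foldl_and_eq {α : Type*} (f : α → Bool) :
    ∀ (l : List α) (b : Bool), (l.foldl (fun b a => b && f a) b = true) ↔
      (b = true ∧ ∀ a ∈ l, f a = true)
  | [], b => by simp
  | a :: l, b => by
    rw [List.foldl_cons, foldl_and_eq f l (b && f a)]
    simp only [Bool.and_eq_true, List.mem_cons]
    constructor
    · rintro ⟨⟨hb, ha⟩, hl⟩
      exact ⟨hb, fun c hc => hc.elim (fun h => h ▸ ha) (hl c)⟩
    · rintro ⟨hb, hl⟩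
      exact ⟨⟨hb, hl a (Or.inl rfl)⟩, fun c hc => hl c (Or.inr hc)⟩

lemma mem_pairsL {L : ℕ} {p : ℕ × ℕ} : p ∈ pairsL L ↔ p.1 ≤ L ∧ p.2 ≤ L := by
  cases p with
  | mk e n =>
    simp [pairsL, List.mem_flatMap, List.mem_map, List.mem_range, Nat.lt_succ_iff]

lemma condB_iff {τ : List Bool} {p : ℕ × ℕ} : condB τ p = true ↔
    Active p.1 p.2 ∧ pref τ p.2 ∈ outL p.1 p.2 τ.length ∧
      (outL p.1 p.2 τ.length).toFinset.card ≤ KK p.1 p.2 := by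
  rw [condB]
  simp [Bool.and_eq_true, decide_eq_true_eq, dl_eq, and_assoc]

lemma killedB_iff {τ : List Bool} : killedB τ = true ↔ Killed τ := by
  rw [killedB, foldl_or_eq]
  constructor
  · rintro (h | ⟨p, hp, hc⟩)
    · simp at h
    · obtain ⟨h1, h2⟩ := mem_pairsL.1 hp
      obtain ⟨ha, hm, hcard⟩ := condB_iff.1 hc
      exact ⟨p.1, h1, p.2, h2, ha, hm, hcard⟩
  · rintro ⟨e, he, n, hn, ha, hm, hcard⟩
    right
    exact ⟨(e, n), mem_pairsL.2 ⟨he, hn⟩, condB_iff.2 ⟨ha, hm, hcard⟩⟩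

lemma memB_iff {σ : List Bool} : memB σ = true ↔ σ ∈ Rtree := by
  rw [memB, foldl_and_eq]
  constructor
  · rintro ⟨-, h⟩ n hn hk
    have hb := h n (List.mem_range.2 (by omega))
    rw [Bool.not_eq_true'] at hb
    rw [← killedB_iff] at hk
    rw [hb] at hk
    exact Bool.false_ne_true hk
  · intro h
    refine ⟨rfl, fun n hn => ?_⟩
    have hn' : n ≤ σ.length := Nat.lt_succ_iff.1 (List.mem_range.1 hn)
    cases hkb : killedB (pref σ n)
    · simp
    · exact absurd (killedB_iff.1 hkb) (h n hn')

lemma computable_Rtree : ComputablePred (· ∈ Rtree) := by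
  rw [ComputablePred.computable_iff]
  refine ⟨memB, h_memB.to_comp, funext fun σ => ?_⟩
  exact propext ⟨fun h => memB_iff.2 h, fun h => memB_iff.1 h⟩

end NoGuess

/-- There is a computable infinite binary tree none of whose paths is guessable. -/
theorem exists_computable_tree_no_guessable_path :
    ∃ R : Set (List Bool), ComputablePred (· ∈ R) ∧ IsBinaryTree R ∧
      (∀ n : ℕ, ∃ σ ∈ R, σ.length = n) ∧
      ∀ x : ℕ → Bool, IsPath R x → ¬ Guessable x := by
  exact ⟨NoGuess.Rtree, NoGuess.computable_Rtree, NoGuess.isBinaryTree_Rtree,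
    NoGuess.levels_nonempty, fun x hx => NoGuess.no_guessable_path x hx⟩
end

section
/- If R is an infinite binary tree, then the L-theory T_R is satisfiable, i.e., T_R has a model. -/
open FirstOrder FirstOrder.Language

/-- The function symbols of the language `L`: a constant `0` and unary functions `S`, `P`. -/
inductive LFunc : ℕ → Type
  | zero : LFunc 0
  | succ : LFunc 1
  | pred : LFunc 1

/-- The relation symbols of the language `L`: a unary relation `A`. -/
inductive LRel : ℕ → Type
  | A : LRel 1

/-- The first-order language with a constant symbol `0`, unary function symbols `S` and `P`,
and a unary relation symbol `A`. -/
def L : Language := ⟨LFunc, LRel⟩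

/-- The reduct `L₀` of `L` without the relation symbol `A`. -/
def L₀ : Language := ⟨LFunc, fun _ => Empty⟩

/-- The inclusion of `L₀` into `L`. -/
def incl : L₀ →ᴸ L where
  onFunction := fun {_} f => f
  onRelation := fun {_} r => Empty.elim r

/-- `ℤ` as an `L₀`-structure, interpreting `0` as zero, `S` as successor, `P` as predecessor. -/
instance intL0Structure : L₀.Structure ℤ where
  funMap := fun f v => match f with
    | .zero => 0
    | .succ => v 0 + 1
    | .pred => v 0 - 1
  RelMap := fun r _ => Empty.elim r

/-- The `L`-term `0`. -/
def zeroT {α : Type*} : L.Term α := Term.func LFunc.zero ![]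

/-- The `L`-term `S t`. -/
def succT {α : Type*} (t : L.Term α) : L.Term α := Term.func LFunc.succ ![t]

/-- The `L`-term `P t`. -/
def predT {α : Type*} (t : L.Term α) : L.Term α := Term.func LFunc.pred ![t]

/-- The `L`-term `Sᵏ t`. -/
def iterST {α : Type*} (k : ℕ) (t : L.Term α) : L.Term α := succT^[k] t

/-- The `L`-term `Pᵏ t`. -/
def iterPT {α : Type*} (k : ℕ) (t : L.Term α) : L.Term α := predT^[k] t

/-- The atomic `L`-formula `A t`. -/
def Aform {α : Type*} (t : L.Term α) : L.Formula α := Relations.formula LRel.A ![t]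

/-- The disjunction of a finite set of formulas (the pre-2025 Mathlib `BoundedFormula.iSup`). -/
noncomputable def finsetISup {α β : Type*} {n : ℕ} (s : Finset β) (f : β → L.BoundedFormula α n) :
    L.BoundedFormula α n :=
  (s.toList.map f).foldr (· ⊔ ·) ⊥

/-- The conjunction of a finite set of formulas (the pre-2025 Mathlib `BoundedFormula.iInf`). -/
noncomputable def finsetIInf {α β : Type*} {n : ℕ} (s : Finset β) (f : β → L.BoundedFormula α n) :
    L.BoundedFormula α n :=
  (s.toList.map f).foldr (· ⊓ ·) ⊤

/-- The sentence asserting that the truth values of `A(0), A(S0), …, A(Sⁿ⁻¹0)` follow the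
pattern `σ`. -/
noncomputable def patternSentence (n : ℕ) (σ : Fin n → Bool) : L.Sentence :=
  finsetIInf Finset.univ fun i : Fin n =>
    if σ i then Aform (iterST i zeroT) else (Aform (iterST i zeroT)).not

/-- The `n`-th tree axiom for `R`: the disjunction, over all length-`n` strings `σ ∈ R`, of
the sentence asserting that `A(0), …, A(Sⁿ⁻¹0)` follow the pattern `σ`. -/
noncomputable def treeAxiom (R : Set (List Bool)) (n : ℕ) : L.Sentence :=
  letI := Classical.decPred fun σ : Fin n → Bool => List.ofFn σ ∈ R
  finsetISup (Finset.univ.filter fun σ : Fin n → Bool => List.ofFn σ ∈ R)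
    (patternSentence n)

/-- The theory `T_R`: all `L₀`-sentences true in `(ℤ, 0, succ, pred)`, together with the
tree axioms for `R`. -/
noncomputable def TR (R : Set (List Bool)) : L.Theory :=
  incl.onTheory (L₀.completeTheory ℤ) ∪ Set.range (treeAxiom R)

section Aux

theorem realize_foldr_sup {α β : Type*} {n : ℕ} {M : Type*} [L.Structure M]
    (f : β → L.BoundedFormula α n) (v : α → M) (xs : Fin n → M) (l : List β) :
    ((l.map f).foldr (· ⊔ ·) ⊥ : L.BoundedFormula α n).Realize v xs ↔
      ∃ b ∈ l, (f b).Realize v xs := by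
  induction l with
  | nil => simp
  | cons a l ih => simp [ih]

theorem realize_foldr_inf {α β : Type*} {n : ℕ} {M : Type*} [L.Structure M]
    (f : β → L.BoundedFormula α n) (v : α → M) (xs : Fin n → M) (l : List β) :
    ((l.map f).foldr (· ⊓ ·) ⊤ : L.BoundedFormula α n).Realize v xs ↔
      ∀ b ∈ l, (f b).Realize v xs := by
  induction l with
  | nil => simp
  | cons a l ih => simp [ih]

theorem realize_finsetISup {α β : Type*} {n : ℕ} {M : Type*} [L.Structure M] (s : Finset β)
    (f : β → L.BoundedFormula α n) (v : α → M) (xs : Fin n → M) :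
    (finsetISup s f).Realize v xs ↔ ∃ b ∈ s, (f b).Realize v xs := by
  unfold finsetISup; rw [realize_foldr_sup]; simp

theorem realize_finsetIInf {α β : Type*} {n : ℕ} {M : Type*} [L.Structure M] (s : Finset β)
    (f : β → L.BoundedFormula α n) (v : α → M) (xs : Fin n → M) :
    (finsetIInf s f).Realize v xs ↔ ∀ b ∈ s, (f b).Realize v xs := by
  unfold finsetIInf; rw [realize_foldr_inf]; simp

/-- `τ` has extensions in `R` of every longer length. -/
def Good (R : Set (List Bool)) (τ : List Bool) : Prop :=
  ∀ n : ℕ, ∃ σ ∈ R, τ <+: σ ∧ σ.length = τ.length + n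

theorem good_mem {R : Set (List Bool)} {τ : List Bool} (h : Good R τ) : τ ∈ R := by
  obtain ⟨σ, hσR, hpre, hlen⟩ := h 0
  rwa [hpre.eq_of_length (by omega)]

theorem good_nil {R : Set (List Bool)} (hInf : ∀ n : ℕ, ∃ σ ∈ R, σ.length = n) :
    Good R [] := by
  intro n
  obtain ⟨σ, hσR, hlen⟩ := hInf n
  exact ⟨σ, hσR, List.nil_prefix, by simpa using hlen⟩

theorem good_step {R : Set (List Bool)} (hTree : IsBinaryTree R) {τ : List Bool}
    (h : Good R τ) : ∃ b : Bool, Good R (τ ++ [b]) := by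
  by_contra hc
  push_neg at hc
  have hcf := hc false
  have hct := hc true
  rw [Good] at hcf hct
  push_neg at hcf hct
  obtain ⟨n₀, hn₀⟩ := hcf
  obtain ⟨n₁, hn₁⟩ := hct
  obtain ⟨σ, hσR, hpre, hlen⟩ := h (1 + max n₀ n₁)
  have hτlt : τ.length < σ.length := by omega
  set b : Bool := σ[τ.length] with hb
  have hpre' : τ ++ [b] <+: σ := by
    have h1 : τ ++ [b] = σ.take (τ.length + 1) := by
      rw [List.take_succ]
      have : σ.take τ.length = τ := List.prefix_iff_eq_take.mp hpre |>.symm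
      rw [this, List.getElem?_eq_getElem hτlt]
      rfl
    rw [h1]; exact List.take_prefix _ _
  have key : ∀ n : ℕ, n ≤ max n₀ n₁ → ∃ σ' ∈ R, (τ ++ [b]) <+: σ' ∧
      σ'.length = (τ ++ [b]).length + n := by
    intro n hn
    refine ⟨σ.take (τ.length + 1 + n), hTree σ hσR _ (List.take_prefix _ _), ?_, ?_⟩
    · rw [List.prefix_take_iff]
      exact ⟨hpre', by simp⟩
    · simp; omega
  cases hbv : b
  · obtain ⟨σ', h1, h2, h3⟩ := key n₀ (le_max_left _ _)
    rw [hbv] at h2 h3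
    exact (hn₀ σ' h1 h2) h3
  · obtain ⟨σ', h1, h2, h3⟩ := key n₁ (le_max_right _ _)
    rw [hbv] at h2 h3
    exact (hn₁ σ' h1 h2) h3

/-- The branch through `R`, as a sequence of nodes. -/
noncomputable def branchAux (R : Set (List Bool)) (hTree : IsBinaryTree R)
    (hInf : ∀ n : ℕ, ∃ σ ∈ R, σ.length = n) : ℕ → {τ : List Bool // Good R τ}
  | 0 => ⟨[], good_nil hInf⟩
  | n + 1 =>
    let p := branchAux R hTree hInf n
    ⟨p.1 ++ [Classical.choose (good_step hTree p.2)],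
      Classical.choose_spec (good_step hTree p.2)⟩

theorem branchAux_length (R : Set (List Bool)) (hTree : IsBinaryTree R)
    (hInf : ∀ n : ℕ, ∃ σ ∈ R, σ.length = n) (n : ℕ) :
    (branchAux R hTree hInf n).1.length = n := by
  induction n with
  | zero => rfl
  | succ n ih => simp [branchAux, ih]

theorem branchAux_prefix (R : Set (List Bool)) (hTree : IsBinaryTree R)
    (hInf : ∀ n : ℕ, ∃ σ ∈ R, σ.length = n) {m n : ℕ} (h : m ≤ n) :
    (branchAux R hTree hInf m).1 <+: (branchAux R hTree hInf n).1 := by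
  induction n with
  | zero => simp_all
  | succ n ih =>
    rcases Nat.lt_or_ge m (n + 1) with h' | h'
    · exact (ih (by omega)).trans ⟨_, rfl⟩
    · have : m = n + 1 := by omega
      subst this; exact List.prefix_refl _

/-- The infinite branch through `R`. -/
noncomputable def branchFun (R : Set (List Bool)) (hTree : IsBinaryTree R)
    (hInf : ∀ n : ℕ, ∃ σ ∈ R, σ.length = n) (n : ℕ) : Bool :=
  (branchAux R hTree hInf (n + 1)).1.getD n false

theorem branchFun_initSeg (R : Set (List Bool)) (hTree : IsBinaryTree R)
    (hInf : ∀ n : ℕ, ∃ σ ∈ R, σ.length = n) (n : ℕ) :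
    List.ofFn (fun i : Fin n => branchFun R hTree hInf i) = (branchAux R hTree hInf n).1 := by
  apply List.ext_getElem
  · simp [branchAux_length]
  · intro i h1 h2
    simp only [List.getElem_ofFn]
    rw [branchAux_length] at h2
    have hpre : (branchAux R hTree hInf (i + 1)).1 <+: (branchAux R hTree hInf n).1 :=
      branchAux_prefix R hTree hInf (by omega)
    have hi : i < (branchAux R hTree hInf (i + 1)).1.length := by
      rw [branchAux_length]; omega
    rw [← hpre.getElem hi]
    simp [branchFun, List.getElem?_eq_getElem hi]

/-- The `L`-structure on `ℤ` determined by a branch `x`. -/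
def Mstr (x : ℕ → Bool) : L.Structure ℤ where
  funMap := fun f v => match f with
    | .zero => 0
    | .succ => v 0 + 1
    | .pred => v 0 - 1
  RelMap := fun r v => match r with
    | .A => 0 ≤ v 0 ∧ x (v 0).toNat = true

theorem Mstr_realize_iterST (x : ℕ → Bool) (k : ℕ) (v : Empty → ℤ) :
    @Term.realize L ℤ (Mstr x) Empty v (iterST k zeroT) = (k : ℤ) := by
  induction k with
  | zero =>
    simp [iterST, zeroT, Term.realize, Mstr]
    rfl
  | succ k ih =>
    have : iterST (k + 1) (zeroT (α := Empty)) = succT (iterST k zeroT) :=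
      Function.iterate_succ_apply' _ _ _
    rw [this]
    simp only [succT, Term.realize, Mstr, Matrix.cons_val_zero]
    show @Term.realize L ℤ (Mstr x) Empty v (iterST k zeroT) + 1 = ((k + 1 : ℕ) : ℤ)
    rw [ih]
    push_cast
    ring

theorem Mstr_realize_Aform (x : ℕ → Bool) (k : ℕ) (v : Empty → ℤ) (v' : Fin 0 → ℤ) :
    @BoundedFormula.Realize L ℤ (Mstr x) Empty 0 (Aform (iterST k zeroT)) v v' ↔ x k = true := by
  change (0 ≤ @Term.realize L ℤ (Mstr x) _ (Sum.elim v v') ((iterST k zeroT).relabel Sum.inl) ∧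
    x (@Term.realize L ℤ (Mstr x) _ (Sum.elim v v')
      ((iterST k zeroT).relabel Sum.inl)).toNat = true) ↔ _
  rw [@Term.realize_relabel L ℤ (Mstr x), Mstr_realize_iterST]
  simp

end Aux

/-- If `R` is an infinite binary tree, then the theory `T_R` is satisfiable. -/
theorem TR_isSatisfiable (R : Set (List Bool)) (hTree : IsBinaryTree R)
    (hInf : ∀ n : ℕ, ∃ σ ∈ R, σ.length = n) : (TR R).IsSatisfiable := by
  classical
  set x := branchFun R hTree hInf with hx
  letI Mx : L.Structure ℤ := Mstr x
  haveI hexp : @LHom.IsExpansionOn L₀ L incl ℤ intL0Structure Mx := by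
    constructor
    · intro n f v; cases f <;> rfl
    · intro n r v; exact r.elim
  have hmod : @Theory.Model L ℤ Mx (TR R) := by
    rw [Theory.model_iff]
    intro φ hφ
    rcases hφ with h | h
    · have : ℤ ⊨ incl.onTheory (L₀.completeTheory ℤ) :=
        (incl.onTheory_model _).mpr inferInstance
      exact this.realize_of_mem φ h
    · obtain ⟨n, rfl⟩ := h
      show Formula.Realize _ _
      unfold treeAxiom
      rw [Formula.Realize, realize_finsetISup]
      refine ⟨fun i : Fin n => x i, ?_, ?_⟩
      · rw [Finset.mem_filter]
        refine ⟨Finset.mem_univ _, ?_⟩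
        rw [hx, branchFun_initSeg]
        exact good_mem (branchAux R hTree hInf n).2
      · rw [patternSentence, realize_finsetIInf]
        intro i _
        cases hxi : x (i : ℕ) with
        | false =>
          simp only [hxi, Bool.false_eq_true, if_false, BoundedFormula.realize_not,
            Mstr_realize_Aform]
          simp [hxi]
        | true =>
          simp only [hxi, if_true, Mstr_realize_Aform]
  exact ⟨@Theory.ModelType.mk L (TR R) ℤ Mx hmod ⟨0⟩⟩
end

section
/- Let R be a binary tree, let M be a model of the L-theory T_R, let φ(x₁,…,xₙ) be an L-formula in prenex normal form with radius r, and let ā and b̄ be n-tuples from M with the same r-type. Then M ⊨ φ(ā) if and only if M ⊨ φ(b̄). -/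
open FirstOrder FirstOrder.Language

/-- The interpretation of `S` in an `L`-structure. -/
def SM {M : Type*} [L.Structure M] (a : M) : M :=
  Structure.funMap (L := L) LFunc.succ ![a]

/-- The interpretation of `P` in an `L`-structure. -/
def PM {M : Type*} [L.Structure M] (a : M) : M :=
  Structure.funMap (L := L) LFunc.pred ![a]

/-- The interpretation of `0` in an `L`-structure. -/
def zeroM {M : Type*} [L.Structure M] : M :=
  Structure.funMap (L := L) LFunc.zero ![]

/-- The interpretation of `A` in an `L`-structure. -/
def AM {M : Type*} [L.Structure M] (a : M) : Prop :=
  Structure.RelMap (L := L) LRel.A ![a]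

/-- `a + k`: apply `S` (if `k ≥ 0`) or `P` (if `k < 0`) `|k|` many times to `a`. -/
def shift {M : Type*} [L.Structure M] (a : M) (k : ℤ) : M :=
  if 0 ≤ k then SM^[k.toNat] a else PM^[(-k).toNat] a

/-- `a` and `b` have the same `r`-neighborhood type: for every `k` with `|k| ≤ r`,
`A(a + k)` holds iff `A(b + k)` holds. -/
def SameNbhdType {M : Type*} [L.Structure M] (r : ℕ) (a b : M) : Prop :=
  ∀ k : ℤ, |k| ≤ (r : ℤ) → (AM (shift a k) ↔ AM (shift b k))

/-- The tuples `a` and `b` (with the convention that the `0`-th coordinate is `0^M`) have the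
same `r`-type: the same `r`-distance table (for all indices `i`, `j` and all `k` with
`|k| ≤ r`, the `j`-th coordinate equals the `i`-th coordinate plus `k` on one side iff it
does on the other) and the same `r`-neighborhood types coordinatewise. -/
def extTuple {M : Type*} [L.Structure M] {n : ℕ} (a : Fin n → M) : Fin (n + 1) → M :=
  Fin.cases zeroM a

/-- Same `r`-type of two tuples (see above). -/
def SameRType {M : Type*} [L.Structure M] {n : ℕ} (r : ℕ) (a b : Fin n → M) : Prop :=
  (∀ i j : Fin (n + 1), ∀ k : ℤ, |k| ≤ (r : ℤ) →
      (extTuple a j = shift (extTuple a i) k ↔ extTuple b j = shift (extTuple b i) k)) ∧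
  ∀ i : Fin n, SameNbhdType r (a i) (b i)

/-- The number of occurrences of `S` and `P` contributed by a single function symbol. -/
def funcWeight : ∀ {n : ℕ}, L.Functions n → ℕ
  | _, LFunc.zero => 0
  | _, LFunc.succ => 1
  | _, LFunc.pred => 1

/-- The total number of occurrences of `S` and `P` in a term. -/
def termRad {α : Type*} : L.Term α → ℕ
  | .var _ => 0
  | .func f ts => funcWeight f + Finset.univ.sum fun i => termRad (ts i)

/-- The radius of a formula: for quantifier-free formulas, the total number of occurrences of
`S` and `P`; each quantifier doubles the radius. -/
def rad {α : Type*} : ∀ {n : ℕ}, L.BoundedFormula α n → ℕ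
  | _, .falsum => 0
  | _, .equal t₁ t₂ => termRad t₁ + termRad t₂
  | _, .rel _ ts => Finset.univ.sum fun i => termRad (ts i)
  | _, .imp φ ψ => rad φ + rad ψ
  | _, .all φ => 2 * rad φ
namespace Indisc

variable {M : Type*} [L.Structure M]

lemma funMap_succ (v : Fin 1 → M) : Structure.funMap (L := L) LFunc.succ v = SM (v 0) := by
  unfold SM; congr 1; funext i; fin_cases i; simp

lemma funMap_pred (v : Fin 1 → M) : Structure.funMap (L := L) LFunc.pred v = PM (v 0) := by
  unfold PM; congr 1; funext i; fin_cases i; simp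

lemma funMap_zero (v : Fin 0 → M) : Structure.funMap (L := L) LFunc.zero v = zeroM := by
  unfold zeroM; congr 1; funext i; exact i.elim0

lemma relMap_A (v : Fin 1 → M) : Structure.RelMap (L := L) LRel.A v = AM (v 0) := by
  unfold AM; congr 1; funext i; fin_cases i; simp

section Perm

variable (e : Equiv.Perm M) (he : ∀ (x : M) (k : ℤ), shift x k = (e ^ k) x)
include he

lemma shift_shift (x : M) (k l : ℤ) : shift (shift x k) l = shift x (k + l) := by
  rw [he, he, he, add_comm, zpow_add]; rfl

lemma shift_zero' (x : M) : shift x 0 = x := by rw [he]; simp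

lemma shift_eq_shift_iff (x y : M) (k l : ℤ) :
    shift x k = shift y l ↔ x = shift y (l - k) := by
  rw [he, he, he]
  constructor
  · intro hxy
    have := congrArg (e ^ (-k) : Equiv.Perm M) hxy
    rw [← Equiv.Perm.mul_apply, ← Equiv.Perm.mul_apply, ← zpow_add, ← zpow_add,
      neg_add_cancel, zpow_zero] at this
    simpa [sub_eq_neg_add] using this
  · intro hx
    rw [hx, ← Equiv.Perm.mul_apply, ← zpow_add]
    congr 1
    ring_nf

variable (hnc : ∀ (x : M) (k : ℤ), (e ^ k) x = x → k = 0)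
include hnc

lemma shift_eq_self_iff (x : M) (k : ℤ) : shift x k = x ↔ k = 0 := by
  rw [he]
  constructor
  · exact hnc x k
  · rintro rfl; simp

lemma eq_shift_self_iff (x : M) (k : ℤ) : x = shift x k ↔ k = 0 := by
  rw [eq_comm, shift_eq_self_iff e he hnc]

end Perm

section Sentences

/-- `L₀`-term `S t`. -/
def sT0 {α : Type*} (t : L₀.Term α) : L₀.Term α := Functions.apply₁ LFunc.succ t

/-- `L₀`-term `P t`. -/
def pT0 {α : Type*} (t : L₀.Term α) : L₀.Term α := Functions.apply₁ LFunc.pred t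

/-- `L₀`-term `Sᵐ t`. -/
def iterS0 {α : Type*} (m : ℕ) (t : L₀.Term α) : L₀.Term α := sT0^[m] t

/-- sentence `∀ x, P (S x) = x` -/
def invSentence1 : L₀.Sentence := BoundedFormula.all (Term.bdEqual (pT0 (sT0 (&0))) (&0))

/-- sentence `∀ x, S (P x) = x` -/
def invSentence2 : L₀.Sentence := BoundedFormula.all (Term.bdEqual (sT0 (pT0 (&0))) (&0))

/-- sentence `∀ x, Sᵐ⁺¹ x ≠ x` -/
def ncSentence (m : ℕ) : L₀.Sentence :=
  BoundedFormula.all (Term.bdEqual (iterS0 (m + 1) (&0)) (&0)).not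

variable {N : Type*} [L₀.Structure N]

lemma realize_iterS0 {α : Type*} (m : ℕ) (t : L₀.Term α) (env : α → N) :
    (iterS0 m t).realize env =
      (fun x : N => Structure.funMap (L := L₀) LFunc.succ ![x])^[m] (t.realize env) := by
  induction m with
  | zero => rfl
  | succ m ih =>
    rw [iterS0, Function.iterate_succ_apply', Function.iterate_succ_apply', ← iterS0]
    rw [sT0]; erw [Term.realize_functions_apply₁, ih]

lemma invSentence1_iff :
    N ⊨ invSentence1 ↔ ∀ x : N, Structure.funMap (L := L₀) LFunc.pred
      ![(Structure.funMap (L := L₀) LFunc.succ ![x])] = x := by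
  simp [invSentence1, Sentence.Realize, Formula.Realize, sT0, pT0,
    Term.realize_functions_apply₁, Fin.snoc]
  refine forall_congr' fun x => ?_
  erw [Term.realize_functions_apply₁, Term.realize_functions_apply₁]
  rfl

lemma invSentence2_iff :
    N ⊨ invSentence2 ↔ ∀ x : N, Structure.funMap (L := L₀) LFunc.succ
      ![(Structure.funMap (L := L₀) LFunc.pred ![x])] = x := by
  simp [invSentence2, Sentence.Realize, Formula.Realize, sT0, pT0,
    Term.realize_functions_apply₁, Fin.snoc]
  refine forall_congr' fun x => ?_
  erw [Term.realize_functions_apply₁, Term.realize_functions_apply₁]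
  rfl

lemma ncSentence_iff (m : ℕ) :
    N ⊨ ncSentence m ↔ ∀ x : N,
      ¬ ((fun y : N => Structure.funMap (L := L₀) LFunc.succ ![y])^[m + 1] x = x) := by
  simp [ncSentence, Sentence.Realize, Formula.Realize, realize_iterS0, Fin.snoc,
    Function.iterate_succ_apply']

lemma int_funMap_succ (v : Fin 1 → ℤ) :
    Structure.funMap (L := L₀) LFunc.succ v = v 0 + 1 := rfl

lemma int_funMap_pred (v : Fin 1 → ℤ) :
    Structure.funMap (L := L₀) LFunc.pred v = v 0 - 1 := rfl

lemma int_iter_succ (m : ℕ) (x : ℤ) :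
    (fun y : ℤ => Structure.funMap (L := L₀) LFunc.succ ![y])^[m] x = x + m := by
  induction m with
  | zero => simp
  | succ m ih => rw [Function.iterate_succ_apply', ih, int_funMap_succ]; push_cast; ring

lemma int_inv1 : (ℤ : Type) ⊨ invSentence1 := by
  rw [invSentence1_iff]; intro x; rw [int_funMap_succ, int_funMap_pred]; simp

lemma int_inv2 : (ℤ : Type) ⊨ invSentence2 := by
  rw [invSentence2_iff]; intro x; rw [int_funMap_pred, int_funMap_succ]; simp

lemma int_nc (m : ℕ) : (ℤ : Type) ⊨ ncSentence m := by
  rw [ncSentence_iff]; intro x; rw [int_iter_succ]; push_cast; omega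

end Sentences

section STE

/-- Extend a tuple by one element placed at `none`. -/
def ext1 {κ : Type*} (c : M) (U : κ → M) : Option κ → M := fun o => o.elim c U

@[simp] lemma ext1_none {κ : Type*} (c : M) (U : κ → M) : ext1 c U none = c := rfl

@[simp] lemma ext1_some {κ : Type*} (c : M) (U : κ → M) (i : κ) : ext1 c U (some i) = U i := rfl

/-- Same `r`-type of two abstract tuples. -/
def STE {κ : Type*} (r : ℕ) (U V : κ → M) : Prop :=
  (∀ i j : κ, ∀ k : ℤ, |k| ≤ (r : ℤ) → (U j = shift (U i) k ↔ V j = shift (V i) k)) ∧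
  (∀ i : κ, ∀ k : ℤ, |k| ≤ (r : ℤ) → (AM (shift (U i) k) ↔ AM (shift (V i) k)))

lemma STE.mono {κ : Type*} {r r' : ℕ} {U V : κ → M} (h : STE r U V) (hr : r' ≤ r) :
    STE r' U V := by
  constructor
  · intro i j k hk
    exact h.1 i j k (hk.trans (by exact_mod_cast hr))
  · intro i k hk
    exact h.2 i k (hk.trans (by exact_mod_cast hr))

lemma STE.symm {κ : Type*} {r : ℕ} {U V : κ → M} (h : STE r U V) : STE r V U :=
  ⟨fun i j k hk => (h.1 i j k hk).symm, fun i k hk => (h.2 i k hk).symm⟩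

lemma STE.comp {κ κ' : Type*} {r : ℕ} {U V : κ → M} (h : STE r U V) (f : κ' → κ) :
    STE r (U ∘ f) (V ∘ f) :=
  ⟨fun i j k hk => h.1 (f i) (f j) k hk, fun i k hk => h.2 (f i) k hk⟩

lemma abs_add_le {k t : ℤ} {r : ℕ} (hk : |k| ≤ (r : ℤ)) (ht : |t| ≤ (r : ℤ)) :
    |k + t| ≤ ((2 * r : ℕ) : ℤ) := by
  push_cast
  have := _root_.abs_add_le k t
  linarith

lemma abs_sub_le' {k t : ℤ} {r : ℕ} (hk : |k| ≤ (r : ℤ)) (ht : |t| ≤ (r : ℤ)) :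
    |k - t| ≤ ((2 * r : ℕ) : ℤ) := by
  push_cast
  have := _root_.abs_add_le k (-t)
  rw [← sub_eq_add_neg] at this
  rw [abs_neg] at this
  linarith

end STE

section Core

variable (e : Equiv.Perm M) (he : ∀ (x : M) (k : ℤ), shift x k = (e ^ k) x)
include he

lemma shift_eq_iff (y x : M) (t : ℤ) : shift y t = x ↔ y = shift x (-t) := by
  conv_lhs => rw [← shift_zero' e he x]
  rw [shift_eq_shift_iff e he]
  norm_num

/-- The key combinatorial lemma: if `c'` is far from the tuple `V`, then there is an
element far from `U` with the same `r`-neighborhood type as `c'`. -/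
lemma star {κ : Type*} [Finite κ] (r : ℕ) (U V : κ → M) (h : STE (2 * r) U V) (c' : M)
    (hfar : ∀ (i : κ) (k : ℤ), |k| ≤ (r : ℤ) → c' ≠ shift (V i) k) :
    ∃ c : M, (∀ (i : κ) (k : ℤ), |k| ≤ (r : ℤ) → c ≠ shift (U i) k) ∧
      (∀ k : ℤ, |k| ≤ (r : ℤ) → (AM (shift c k) ↔ AM (shift c' k))) := by
  classical
  by_contra hcon
  have key : ∀ c : M, (∀ k : ℤ, |k| ≤ (r : ℤ) → (AM (shift c k) ↔ AM (shift c' k))) →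
      ∃ p : κ × ℤ, |p.2| ≤ (r : ℤ) ∧ c = shift (U p.1) p.2 := by
    intro c hc
    by_contra hex
    push_neg at hex
    exact hcon ⟨c, fun i k hk => hex (i, k) hk, hc⟩
  set D : Set M := {x | ∀ k : ℤ, |k| ≤ (r : ℤ) → (AM (shift x k) ↔ AM (shift c' k))} with hD
  have hc'D : c' ∈ D := fun k _ => Iff.rfl
  have hDsub : D ⊆ (fun p : κ × ℤ => shift (U p.1) p.2) ''
      (Set.univ ×ˢ Set.Icc (-(r : ℤ)) (r : ℤ)) := by
    intro x hx
    obtain ⟨p, hp, hxe⟩ := key x hx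
    exact ⟨p, ⟨Set.mem_univ _, Set.mem_Icc.2 (abs_le.mp hp)⟩, hxe.symm⟩
  have hDfin : D.Finite :=
    Set.Finite.subset ((Set.finite_univ.prod (Set.finite_Icc _ _)).image _) hDsub
  let f : M → M := fun x =>
    if hx : ∃ p : κ × ℤ, |p.2| ≤ (r : ℤ) ∧ x = shift (U p.1) p.2
    then shift (V hx.choose.1) hx.choose.2 else x
  have hfD : ∀ x ∈ D, ∃ p : κ × ℤ, (|p.2| ≤ (r : ℤ) ∧ x = shift (U p.1) p.2) ∧
      f x = shift (V p.1) p.2 := by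
    intro x hx
    have hex := key x hx
    refine ⟨hex.choose, hex.choose_spec, ?_⟩
    simp only [f, dif_pos hex]
  have hmaps : Set.MapsTo f D D := by
    intro x hx
    obtain ⟨⟨i, k⟩, ⟨hk, hxe⟩, hfx⟩ := hfD x hx
    rw [hfx]
    intro t ht
    rw [shift_shift e he]
    have hb : |k + t| ≤ ((2 * r : ℕ) : ℤ) := abs_add_le hk ht
    have h1 := (h.2 i (k + t) hb).symm
    have h2 : AM (shift (U i) (k + t)) ↔ AM (shift x t) := by
      rw [hxe, shift_shift e he]
    exact h1.trans (h2.trans (hx t ht))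
  have hinj : Set.InjOn f D := by
    intro x hx y hy hxy
    obtain ⟨⟨i, k⟩, ⟨hk, hxe⟩, hfx⟩ := hfD x hx
    obtain ⟨⟨j, l⟩, ⟨hl, hye⟩, hfy⟩ := hfD y hy
    rw [hfx, hfy, shift_eq_shift_iff e he] at hxy
    have := (h.1 j i (l - k) (abs_sub_le' hl hk)).mpr hxy
    rw [hxe, hye, shift_eq_shift_iff e he]
    exact this
  obtain ⟨x, hxD, hfx⟩ := ((hDfin.injOn_iff_bijOn_of_mapsTo hmaps).mp hinj).surjOn hc'D
  obtain ⟨⟨i, k⟩, ⟨hk, hxe⟩, hfx2⟩ := hfD x hxD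
  exact hfar i k hk (by rw [← hfx, hfx2])

variable (hnc : ∀ (x : M) (k : ℤ), (e ^ k) x = x → k = 0)
include hnc

/-- The extension property: a tuple with the same `2r`-type can be extended to one with the
same `r`-type, for any new element on the second side. -/
lemma extension {κ : Type*} [Finite κ] (r : ℕ) (U V : κ → M) (h : STE (2 * r) U V) (c' : M) :
    ∃ c : M, STE r (ext1 c U) (ext1 c' V) := by
  by_cases hA : ∃ (i : κ) (k : ℤ), |k| ≤ (r : ℤ) ∧ c' = shift (V i) k
  · obtain ⟨i, k, hk, rfl⟩ := hA
    refine ⟨shift (U i) k, ?_, ?_⟩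
    · rintro (_ | p) (_ | q) t ht
      · rw [ext1_none, eq_shift_self_iff e he hnc, eq_shift_self_iff e he hnc]
      · simp only [ext1_none, ext1_some]
        rw [shift_shift e he, shift_shift e he]
        exact h.1 i q (k + t) (abs_add_le hk ht)
      · simp only [ext1_none, ext1_some]
        rw [shift_eq_shift_iff e he, shift_eq_shift_iff e he]
        exact h.1 p i (t - k) (abs_sub_le' ht hk)
      · exact h.1 p q t (ht.trans (by push_cast; linarith))
    · rintro (_ | p) t ht
      · simp only [ext1_none]
        rw [shift_shift e he, shift_shift e he]
        exact h.2 i (k + t) (abs_add_le hk ht)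
      · exact h.2 p t (ht.trans (by push_cast; linarith))
  · push_neg at hA
    obtain ⟨c, hcfar, hcnbhd⟩ := star e he r U V h c' hA
    refine ⟨c, ?_, ?_⟩
    · rintro (_ | p) (_ | q) t ht
      · rw [ext1_none, eq_shift_self_iff e he hnc, eq_shift_self_iff e he hnc]
      · simp only [ext1_none, ext1_some]
        rw [eq_comm, shift_eq_iff e he, eq_comm (a := V q)]
        rw [shift_eq_iff e he]
        have hnt : |(-t)| ≤ (r : ℤ) := by rwa [abs_neg]
        exact iff_of_false (hcfar q (-t) hnt) (hA q (-t) hnt)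
      · simp only [ext1_none, ext1_some]
        exact iff_of_false (hcfar p t ht) (hA p t ht)
      · exact h.1 p q t (ht.trans (by push_cast; linarith))
    · rintro (_ | p) t ht
      · exact hcnbhd t ht
      · exact h.2 p t (ht.trans (by push_cast; linarith))

end Core

section Terms

lemma shift_one (x : M) : shift x 1 = SM x := by simp [shift]

lemma shift_neg_one (x : M) : shift x (-1) = PM x := by norm_num [shift]

variable (e : Equiv.Perm M) (he : ∀ (x : M) (k : ℤ), shift x k = (e ^ k) x)
include he

lemma SM_shift (x : M) (k : ℤ) : SM (shift x k) = shift x (k + 1) := by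
  rw [← shift_one (shift x k), shift_shift e he]

lemma PM_shift (x : M) (k : ℤ) : PM (shift x k) = shift x (k - 1) := by
  rw [← shift_neg_one (shift x k), shift_shift e he, sub_eq_add_neg]

lemma term_decomp {α : Type*} (t : L.Term α) :
    ∃ (s : Option α) (k : ℤ), |k| ≤ (termRad t : ℤ) ∧
      ∀ env : α → M, t.realize env = shift (ext1 zeroM env s) k := by
  induction t with
  | var a => exact ⟨some a, 0, by simp, fun env => (shift_zero' e he _).symm⟩
  | func f ts ih =>
    cases f with
    | zero =>
      refine ⟨none, 0, by simp, fun env => ?_⟩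
      erw [Term.realize_func, shift_zero' e he, ext1_none]
      exact funMap_zero _
    | succ =>
      obtain ⟨s, k, hk, hval⟩ := ih 0
      refine ⟨s, k + 1, ?_, fun env => ?_⟩
      · have hrad : (termRad (Term.func LFunc.succ ts) : ℤ) = 1 + (termRad (ts 0) : ℤ) := by
          simp [termRad, funcWeight]
        rw [hrad]
        have h1 := _root_.abs_add_le k 1
        simp only [abs_one] at h1
        linarith
      · erw [Term.realize_func, funMap_succ]
        rw [hval env, SM_shift e he]
    | pred =>
      obtain ⟨s, k, hk, hval⟩ := ih 0
      refine ⟨s, k - 1, ?_, fun env => ?_⟩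
      · have hrad : (termRad (Term.func LFunc.pred ts) : ℤ) = 1 + (termRad (ts 0) : ℤ) := by
          simp [termRad, funcWeight]
        rw [hrad]
        have h1 := _root_.abs_add_le k (-1)
        rw [← sub_eq_add_neg] at h1
        simp only [abs_neg, abs_one] at h1
        linarith
      · erw [Term.realize_func, funMap_pred]
        rw [hval env, PM_shift e he]

lemma qf_case {α : Type*} : ∀ {m : ℕ} {φ : L.BoundedFormula α m}, φ.IsQF →
    ∀ (r : ℕ), rad φ ≤ r → ∀ (v w : α → M) (xs ys : Fin m → M),
    STE r (ext1 zeroM (Sum.elim v xs)) (ext1 zeroM (Sum.elim w ys)) →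
    (φ.Realize v xs ↔ φ.Realize w ys) := by
  intro m φ hφ
  induction hφ with
  | falsum =>
    intro r hr v w xs ys h
    exact Iff.rfl
  | of_isAtomic ha =>
    cases ha with
    | equal t₁ t₂ =>
      intro r hr v w xs ys h
      obtain ⟨s₁, k₁, hk₁, hval₁⟩ := term_decomp e he t₁
      obtain ⟨s₂, k₂, hk₂, hval₂⟩ := term_decomp e he t₂
      rw [BoundedFormula.realize_bdEqual, BoundedFormula.realize_bdEqual,
        hval₁ (Sum.elim v xs), hval₂ (Sum.elim v xs), hval₁ (Sum.elim w ys),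
        hval₂ (Sum.elim w ys), shift_eq_shift_iff e he, shift_eq_shift_iff e he]
      have hradeq : rad (t₁.bdEqual t₂) = termRad t₁ + termRad t₂ := rfl
      refine h.1 s₂ s₁ (k₂ - k₁) ?_
      have h1 := _root_.abs_add_le k₂ (-k₁)
      rw [← sub_eq_add_neg, abs_neg] at h1
      have hr' : (termRad t₁ : ℤ) + (termRad t₂ : ℤ) ≤ (r : ℤ) := by
        rw [hradeq] at hr
        exact_mod_cast (by push_cast; exact_mod_cast hr : ((termRad t₁ + termRad t₂ : ℕ) : ℤ) ≤ (r : ℤ))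
      linarith
    | rel R ts =>
      cases R
      intro r hr v w xs ys h
      obtain ⟨s, k, hk, hval⟩ := term_decomp e he (ts 0)
      erw [BoundedFormula.realize_rel, relMap_A, BoundedFormula.realize_rel, relMap_A]
      rw [hval (Sum.elim v xs), hval (Sum.elim w ys)]
      refine h.2 s k ?_
      have hradeq : rad (Relations.boundedFormula LRel.A ts) = termRad (ts 0) := by
        simp [rad, Relations.boundedFormula, Fin.sum_univ_one]
      rw [hradeq] at hr
      exact hk.trans (by exact_mod_cast hr)
  | imp h₁ h₂ ih₁ ih₂ =>
    intro r hr v w xs ys h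
    rw [BoundedFormula.realize_imp, BoundedFormula.realize_imp]
    have hr' : rad _ + rad _ ≤ r := hr
    exact imp_congr (ih₁ r (by omega) v w xs ys h) (ih₂ r (by omega) v w xs ys h)

end Terms

section Main

/-- Reindexing map for the bound-variable extension. -/
def reMap (n m : ℕ) : Option (Fin n ⊕ Fin (m + 1)) → Option (Option (Fin n ⊕ Fin m))
  | none => some none
  | some (Sum.inl i) => some (some (Sum.inl i))
  | some (Sum.inr j) => Fin.lastCases none (fun j' => some (some (Sum.inr j'))) j

lemma reindex_eq {n m : ℕ} (v : Fin n → M) (xs : Fin m → M) (c : M) :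
    (ext1 c (ext1 zeroM (Sum.elim v xs))) ∘ (reMap n m) =
      ext1 zeroM (Sum.elim v (Fin.snoc xs c)) := by
  funext o
  rcases o with _ | (i | j)
  · rfl
  · rfl
  · induction j using Fin.lastCases with
    | last => simp [reMap, ext1, Fin.snoc_last]
    | cast j' => simp [reMap, ext1, Fin.snoc_castSucc]

lemma rad_ex {α : Type*} {m : ℕ} (φ : L.BoundedFormula α (m + 1)) :
    rad φ.ex = 2 * rad φ := by
  have h : rad φ.ex = 2 * (rad φ + 0) + 0 := rfl
  omega

variable (e : Equiv.Perm M) (he : ∀ (x : M) (k : ℤ), shift x k = (e ^ k) x)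
  (hnc : ∀ (x : M) (k : ℤ), (e ^ k) x = x → k = 0)
include he hnc

lemma mainAux {n : ℕ} : ∀ {m : ℕ} {φ : L.BoundedFormula (Fin n) m}, φ.IsPrenex →
    ∀ (v w : Fin n → M) (xs ys : Fin m → M),
    STE (rad φ) (ext1 zeroM (Sum.elim v xs)) (ext1 zeroM (Sum.elim w ys)) →
    (φ.Realize v xs ↔ φ.Realize w ys) := by
  intro m φ hφ
  induction hφ with
  | of_isQF h =>
    intro v w xs ys hst
    exact qf_case e he h _ le_rfl v w xs ys hst
  | @all m' φ' hp ih =>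
    intro v w xs ys hst
    rw [BoundedFormula.realize_all, BoundedFormula.realize_all]
    have hst2 : STE (2 * rad φ') (ext1 zeroM (Sum.elim v xs)) (ext1 zeroM (Sum.elim w ys)) := hst
    constructor
    · intro hall c'
      obtain ⟨c, hc⟩ := extension e he hnc (rad φ') _ _ hst2 c'
      have hc2 := hc.comp (reMap n m')
      rw [reindex_eq, reindex_eq] at hc2
      exact (ih v w _ _ hc2).mp (hall c)
    · intro hall c
      obtain ⟨c', hc⟩ := extension e he hnc (rad φ') _ _ hst2.symm c
      have hc2 := hc.symm.comp (reMap n m')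
      rw [reindex_eq, reindex_eq] at hc2
      exact (ih v w _ _ hc2).mpr (hall c')
  | @ex m' φ' hp ih =>
    intro v w xs ys hst
    rw [BoundedFormula.realize_ex, BoundedFormula.realize_ex]
    rw [rad_ex] at hst
    constructor
    · rintro ⟨c, hcreal⟩
      obtain ⟨c', hc⟩ := extension e he hnc (rad φ') _ _ hst.symm c
      have hc2 := hc.symm.comp (reMap n m')
      rw [reindex_eq, reindex_eq] at hc2
      exact ⟨c', (ih v w _ _ hc2).mp hcreal⟩
    · rintro ⟨c', hcreal⟩
      obtain ⟨c, hc⟩ := extension e he hnc (rad φ') _ _ hst c'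
      have hc2 := hc.comp (reMap n m')
      rw [reindex_eq, reindex_eq] at hc2
      exact ⟨c, (ih v w _ _ hc2).mpr hcreal⟩

end Main

section BuildPerm

variable (h1 : ∀ x : M, PM (SM x) = x) (h2 : ∀ x : M, SM (PM x) = x)

/-- `S` as a permutation of `M`. -/
def permS : Equiv.Perm M := ⟨SM, PM, h1, h2⟩

lemma permS_pow (n : ℕ) (x : M) : ((permS h1 h2) ^ n) x = SM^[n] x := by
  induction n generalizing x with
  | zero => simp
  | succ n ih =>
    rw [pow_succ, Equiv.Perm.mul_apply, Function.iterate_succ_apply]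
    exact ih (SM x)

lemma permS_pow_inv (n : ℕ) (x : M) : ((permS h1 h2)⁻¹ ^ n) x = PM^[n] x := by
  induction n generalizing x with
  | zero => simp
  | succ n ih =>
    rw [pow_succ, Equiv.Perm.mul_apply, Function.iterate_succ_apply]
    exact ih (PM x)

lemma permS_he (x : M) (k : ℤ) : shift x k = ((permS h1 h2) ^ k) x := by
  rcases k with n | n
  · rw [Int.ofNat_eq_coe, zpow_natCast, permS_pow]
    simp [shift]
  · rw [zpow_negSucc, ← inv_pow, permS_pow_inv]
    simp [shift, Int.neg_negSucc]

lemma permS_hnc (hnc0 : ∀ (m : ℕ) (x : M), SM^[m + 1] x ≠ x)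
    (x : M) (k : ℤ) (hk : ((permS h1 h2) ^ k) x = x) : k = 0 := by
  rcases k with n | n
  · cases n with
    | zero => rfl
    | succ m =>
      exfalso
      rw [Int.ofNat_eq_coe, zpow_natCast, permS_pow] at hk
      exact hnc0 m x hk
  · exfalso
    rw [zpow_negSucc] at hk
    have hk2 : ((permS h1 h2) ^ (n + 1)) x = x := by
      conv_lhs => rw [← hk]
      exact Equiv.apply_symm_apply _ _
    rw [permS_pow] at hk2
    exact hnc0 n x hk2

end BuildPerm

end Indisc


/-- Indiscernibility principle: if `M ⊨ T_R`, `φ` is a prenex `L`-formula of radius `r`, and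
`ā`, `b̄` are tuples with the same `r`-type, then `M ⊨ φ(ā) ↔ M ⊨ φ(b̄)`. -/
theorem indiscernability (R : Set (List Bool)) (hTree : IsBinaryTree R)
    (M : Type*) [L.Structure M] (hM : M ⊨ TR R) {n : ℕ} (φ : L.Formula (Fin n))
    (hφ : φ.IsPrenex) (a b : Fin n → M) (hab : SameRType (rad φ) a b) :
    φ.Realize a ↔ φ.Realize b := by
  classical
  haveI := hM
  letI S0 : L₀.Structure M := incl.reduct M
  haveI hexp : incl.IsExpansionOn M := LHom.isExpansionOn_reduct incl M
  have hsat : ∀ σ : L₀.Sentence, (ℤ : Type) ⊨ σ → M ⊨ σ := by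
    intro σ hσ
    have hmem : incl.onSentence σ ∈ TR R :=
      Set.mem_union_left _ (Set.mem_image_of_mem _ ((mem_completeTheory).2 hσ))
    have h1 : M ⊨ incl.onSentence σ := (TR R).realize_sentence_of_mem hmem
    exact (LHom.realize_onSentence (M := M) incl σ).mp h1
  have hfs : ∀ v : Fin 1 → M, Structure.funMap (L := L₀) LFunc.succ v = SM (v 0) :=
    fun v => Indisc.funMap_succ v
  have hfp : ∀ v : Fin 1 → M, Structure.funMap (L := L₀) LFunc.pred v = PM (v 0) :=
    fun v => Indisc.funMap_pred v
  have h1 : ∀ x : M, PM (SM x) = x := by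
    intro x
    have h := (Indisc.invSentence1_iff).mp (hsat _ Indisc.int_inv1) x
    rw [hfs] at h
    rw [hfp] at h
    simpa using h
  have h2 : ∀ x : M, SM (PM x) = x := by
    intro x
    have h := (Indisc.invSentence2_iff).mp (hsat _ Indisc.int_inv2) x
    rw [hfp] at h
    rw [hfs] at h
    simpa using h
  have hnc0 : ∀ (m : ℕ) (x : M), SM^[m + 1] x ≠ x := by
    intro m x
    have h := (Indisc.ncSentence_iff m).mp (hsat _ (Indisc.int_nc m)) x
    have hfun : (fun y : M => Structure.funMap (L := L₀) LFunc.succ ![y]) = SM := by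
      funext y
      rw [hfs]
      simp
    rwa [hfun] at h
  have he : ∀ (x : M) (k : ℤ), shift x k = ((Indisc.permS h1 h2) ^ k) x :=
    fun x k => Indisc.permS_he h1 h2 x k
  have hnc : ∀ (x : M) (k : ℤ), ((Indisc.permS h1 h2) ^ k) x = x → k = 0 :=
    fun x k hk => Indisc.permS_hnc h1 h2 hnc0 x k hk
  have htup : ∀ c : Fin n → M, ∀ o : Option (Fin n ⊕ Fin 0),
      Indisc.ext1 zeroM (Sum.elim c (default : Fin 0 → M)) o =
        extTuple c (Option.elim o 0 (Sum.elim Fin.succ (fun j => j.elim0))) := by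
    rintro c (_ | (i | j))
    · simp [Indisc.ext1, extTuple]
    · simp [Indisc.ext1, extTuple]
    · exact j.elim0
  have hste : Indisc.STE (rad φ) (Indisc.ext1 zeroM (Sum.elim a (default : Fin 0 → M)))
      (Indisc.ext1 zeroM (Sum.elim b (default : Fin 0 → M))) := by
    constructor
    · intro i j k hk
      rw [htup a j, htup a i, htup b j, htup b i]
      exact hab.1 _ _ k hk
    · rintro (_ | (i | j)) k hk
      · exact Iff.rfl
      · exact hab.2 i k hk
      · exact j.elim0
  exact Indisc.mainAux (Indisc.permS h1 h2) he hnc hφ a b default default hste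
end
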